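/- arXiv:2507.12147 — 2 statements merged into one kernel-verified Lean document; each statement's English description precedes it below -/
import Mathlib

section
/- Let r ≥ 0 and set a = 2 e^{4r} ‖σ‖_{L^p[0,1]}³. There exists a constant C > 0, depending only on r, σ₁, σ₂, such that for every μ ∈ ℂ with Im μ > −r satisfying γ₁(μ) ≤ 1/(2a) and γ₂(μ) ≤ 1/(2a), the following holds: if (w₁,w₂) is a solution of the Dirac system with parameter μ satisfying w₁(0) = 1 and w₂(1) = 0, then for all x ∈ [0,1], |e^{−iμx} w₁(x) − 1 + (K₁e)(x)| ≤ C γ̃(μ) and |e^{−iμx} w₂(x) − ∫ₓ¹ e^{2iμ(t−x)} σ₂(t) dt + ∫ₓ¹ e^{2iμ(t−x)} σ₂(t) (K₁e)(t) dt| ≤ C γ̃(μ). -/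
open MeasureTheory Set
open scoped ENNReal

noncomputable section

/-- The integral operator `K₁` associated with the Dirac system. -/
def K1 (σ₁ σ₂ : ℝ → ℂ) (μ : ℂ) (z : ℝ → ℂ) : ℝ → ℂ := fun x =>
  ∫ t in (0:ℝ)..x, σ₁ t * ∫ s in t..(1:ℝ),
    Complex.exp (2 * Complex.I * μ * (s - t)) * σ₂ s * z s

/-- The integral operator `K₂` associated with the Dirac system. -/
def K2 (σ₁ σ₂ : ℝ → ℂ) (μ : ℂ) (z : ℝ → ℂ) : ℝ → ℂ := fun x =>
  ∫ t in x..(1:ℝ), σ₂ t * ∫ s in (0:ℝ)..t,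
    Complex.exp (2 * Complex.I * μ * (t - s)) * σ₁ s * z s

/-- `γ₀₁(x,μ) = |∫₀ˣ e^{2iμ(x−t)} σ₁(t) dt|`. -/
def gamma01 (σ₁ : ℝ → ℂ) (μ : ℂ) (x : ℝ) : ℝ :=
  ‖∫ t in (0:ℝ)..x, Complex.exp (2 * Complex.I * μ * (x - t)) * σ₁ t‖

/-- `γ₀₂(x,μ) = |∫ₓ¹ e^{2iμ(t−x)} σ₂(t) dt|`. -/
def gamma02 (σ₂ : ℝ → ℂ) (μ : ℂ) (x : ℝ) : ℝ :=
  ‖∫ t in x..(1:ℝ), Complex.exp (2 * Complex.I * μ * (t - x)) * σ₂ t‖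

/-- `γ₁(μ) = ‖γ₀₁(·,μ)‖_{L^q[0,1]}`. -/
def gamma1 (σ₁ : ℝ → ℂ) (q : ℝ≥0∞) (μ : ℂ) : ℝ :=
  (eLpNorm (fun x => gamma01 σ₁ μ x) q (volume.restrict (Icc (0:ℝ) 1))).toReal

/-- `γ₂(μ) = ‖γ₀₂(·,μ)‖_{L^q[0,1]}`. -/
def gamma2 (σ₂ : ℝ → ℂ) (q : ℝ≥0∞) (μ : ℂ) : ℝ :=
  (eLpNorm (fun x => gamma02 σ₂ μ x) q (volume.restrict (Icc (0:ℝ) 1))).toReal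

/-- `γ̃(μ) = ∫₀¹ |σ₂| γ₀₁² + ∫₀¹ |σ₁| γ₀₂²`. -/
def gammaT (σ₁ σ₂ : ℝ → ℂ) (μ : ℂ) : ℝ :=
  (∫ s in (0:ℝ)..1, ‖σ₂ s‖ * (gamma01 σ₁ μ s) ^ 2)
    + ∫ s in (0:ℝ)..1, ‖σ₁ s‖ * (gamma02 σ₂ μ s) ^ 2

/-- `‖σ‖_{L^p[0,1]}` where `σ(x) = max(|σ₁(x)|,|σ₂(x)|)`. -/
def sigmaNorm (σ₁ σ₂ : ℝ → ℂ) (p : ℝ≥0∞) : ℝ :=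
  (eLpNorm (fun x => max ‖σ₁ x‖ ‖σ₂ x‖) p (volume.restrict (Icc (0:ℝ) 1))).toReal

/-- The constant function `1` on `[0,1]`. -/
def eFun : ℝ → ℂ := fun _ => 1

/-- A solution of the Dirac system `y₁' + σ₁ y₂ = iμ y₁`, `y₂' + σ₂ y₁ = −iμ y₂` on `[0,1]`,
with `y₁, y₂` absolutely continuous (i.e. in `W^{1,1}[0,1]`, so each is the indefinite
integral of an integrable function, and the equations hold a.e. with those derivatives). -/
def IsDiracSolution (σ₁ σ₂ : ℝ → ℂ) (μ : ℂ) (y₁ y₂ : ℝ → ℂ) : Prop :=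
  ∃ g₁ g₂ : ℝ → ℂ,
    IntervalIntegrable g₁ volume 0 1 ∧ IntervalIntegrable g₂ volume 0 1 ∧
    (∀ x ∈ Icc (0:ℝ) 1, y₁ x = y₁ 0 + ∫ t in (0:ℝ)..x, g₁ t) ∧
    (∀ x ∈ Icc (0:ℝ) 1, y₂ x = y₂ 0 + ∫ t in (0:ℝ)..x, g₂ t) ∧
    (∀ᵐ x ∂(volume.restrict (Icc (0:ℝ) 1)),
      g₁ x + σ₁ x * y₂ x = Complex.I * μ * y₁ x) ∧
    (∀ᵐ x ∂(volume.restrict (Icc (0:ℝ) 1)),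
      g₂ x + σ₂ x * y₁ x = -(Complex.I * μ) * y₂ x)


/-- Fubini on a triangle. -/
lemma fubini_tri {a b : ℝ} (hab : a ≤ b) {f g : ℝ → ℂ}
    (hf : IntegrableOn f (Ioc a b) volume) (hg : IntegrableOn g (Ioc a b) volume) :
    (∫ t in a..b, f t * ∫ s in t..b, g s) = ∫ s in a..b, (∫ t in a..s, f t) * g s := by
  set ν := volume.restrict (Ioc a b) with hν
  have hmeas : MeasurableSet {p : ℝ × ℝ | p.1 ≤ p.2} :=
    measurableSet_le measurable_fst measurable_snd
  have hFint0 : Integrable (fun z : ℝ × ℝ => f z.1 * g z.2) (ν.prod ν) :=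
    hf.mul_prod hg
  have hFint : Integrable ({p : ℝ × ℝ | p.1 ≤ p.2}.indicator (fun z => f z.1 * g z.2)) (ν.prod ν) :=
    hFint0.indicator hmeas
  have hswap := MeasureTheory.integral_integral_swap
    (f := fun t s => {p : ℝ × ℝ | p.1 ≤ p.2}.indicator (fun z : ℝ × ℝ => f z.1 * g z.2) (t, s))
    (μ := ν) (ν := ν) hFint
  have hL : (∫ t, ∫ s, {p : ℝ × ℝ | p.1 ≤ p.2}.indicator
      (fun z : ℝ × ℝ => f z.1 * g z.2) (t, s) ∂ν ∂ν) = ∫ t in a..b, f t * ∫ s in t..b, g s := by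
    rw [intervalIntegral.integral_of_le hab, hν]
    refine setIntegral_congr_fun measurableSet_Ioc (fun t ht => ?_)
    have h1 : ∀ s : ℝ, {p : ℝ × ℝ | p.1 ≤ p.2}.indicator
        (fun z : ℝ × ℝ => f z.1 * g z.2) (t, s) = (Ici t).indicator (fun s => f t * g s) s := by
      intro s
      by_cases h : t ≤ s
      · rw [Set.indicator_of_mem (by exact h) , Set.indicator_of_mem (by exact h)]
      · rw [Set.indicator_of_notMem (by exact h), Set.indicator_of_notMem (by exact h)]
    calc (∫ s, {p : ℝ × ℝ | p.1 ≤ p.2}.indicator (fun z : ℝ × ℝ => f z.1 * g z.2) (t, s) ∂ν)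
        = ∫ s in Ioc a b, (Ici t).indicator (fun s => f t * g s) s := by
          rw [hν]; exact integral_congr_ae (Filter.Eventually.of_forall fun s => h1 s)
      _ = ∫ s in Ioc a b ∩ Ici t, f t * g s := setIntegral_indicator measurableSet_Ici
      _ = ∫ s in Icc t b, f t * g s := by
          have hseteq : Ioc a b ∩ Ici t = Icc t b := by
            ext s
            simp only [mem_inter_iff, mem_Ioc, mem_Ici, mem_Icc]
            constructor
            · rintro ⟨⟨_, h2⟩, h3⟩; exact ⟨h3, h2⟩
            · rintro ⟨h1', h2⟩; exact ⟨⟨lt_of_lt_of_le ht.1 h1', h2⟩, h1'⟩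
          rw [hseteq]
      _ = ∫ s in Ioc t b, f t * g s := integral_Icc_eq_integral_Ioc
      _ = f t * ∫ s in t..b, g s := by
          rw [intervalIntegral.integral_of_le ht.2, integral_const_mul]
  have hR : (∫ s, ∫ t, {p : ℝ × ℝ | p.1 ≤ p.2}.indicator
      (fun z : ℝ × ℝ => f z.1 * g z.2) (t, s) ∂ν ∂ν) = ∫ s in a..b, (∫ t in a..s, f t) * g s := by
    rw [intervalIntegral.integral_of_le hab, hν]
    refine setIntegral_congr_fun measurableSet_Ioc (fun s hs => ?_)
    have h1 : ∀ t : ℝ, {p : ℝ × ℝ | p.1 ≤ p.2}.indicator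
        (fun z : ℝ × ℝ => f z.1 * g z.2) (t, s) = (Iic s).indicator (fun t => f t * g s) t := by
      intro t
      by_cases h : t ≤ s
      · rw [Set.indicator_of_mem (by exact h), Set.indicator_of_mem (by exact h)]
      · rw [Set.indicator_of_notMem (by exact h), Set.indicator_of_notMem (by exact h)]
    calc (∫ t, {p : ℝ × ℝ | p.1 ≤ p.2}.indicator (fun z : ℝ × ℝ => f z.1 * g z.2) (t, s) ∂ν)
        = ∫ t in Ioc a b, (Iic s).indicator (fun t => f t * g s) t := by
          rw [hν]; exact integral_congr_ae (Filter.Eventually.of_forall fun t => h1 t)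
      _ = ∫ t in Ioc a b ∩ Iic s, f t * g s := setIntegral_indicator measurableSet_Iic
      _ = ∫ t in Ioc a s, f t * g s := by rw [Set.Ioc_inter_Iic, inf_eq_right.mpr hs.2]
      _ = (∫ t in a..s, f t) * g s := by
          rw [intervalIntegral.integral_of_le hs.1.le, integral_mul_const]
  rw [← hL, ← hR]
  exact hswap

lemma hasDerivAt_cexp_mul (c : ℂ) (y : ℝ) :
    HasDerivAt (fun s : ℝ => Complex.exp (c * s)) (c * Complex.exp (c * y)) y := by
  have h1 : HasDerivAt (fun s : ℝ => c * (s : ℂ)) c y := by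
    simpa using (Complex.ofRealCLM.hasDerivAt (x := y)).const_mul c
  simpa [mul_comm] using h1.cexp

/-- `exp`-primitive identity via Fubini: no differentiation of the primitive needed. -/
lemma expPrim (c k : ℂ) {g : ℝ → ℂ} (hg : IntervalIntegrable g volume 0 1)
    {x : ℝ} (hx : x ∈ Icc (0 : ℝ) 1) :
    Complex.exp (c * x) * (k + ∫ t in (0:ℝ)..x, g t)
      = k + ∫ s in (0:ℝ)..x, Complex.exp (c * s)
          * (g s + c * (k + ∫ t in (0:ℝ)..s, g t)) := by
  have hx0 : (0:ℝ) ≤ x := hx.1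
  have hsub : uIcc (0:ℝ) x ⊆ uIcc (0:ℝ) 1 := by
    rw [uIcc_of_le hx0, uIcc_of_le zero_le_one]
    exact Icc_subset_Icc le_rfl hx.2
  have hgx : IntervalIntegrable g volume 0 x := hg.mono_set hsub
  have hexpc : Continuous fun s : ℝ => Complex.exp (c * s) := by
    fun_prop
  have hcexpc : Continuous fun s : ℝ => c * Complex.exp (c * s) := continuous_const.mul hexpc
  have hprim : ∀ y : ℝ, (∫ s in (0:ℝ)..y, c * Complex.exp (c * s))
      = Complex.exp (c * y) - 1 := by
    intro y
    have := intervalIntegral.integral_eq_sub_of_hasDerivAt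
      (f := fun s : ℝ => Complex.exp (c * s)) (f' := fun s : ℝ => c * Complex.exp (c * s))
      (fun t _ => hasDerivAt_cexp_mul c t) (hcexpc.intervalIntegrable 0 y)
    simpa using this
  -- continuity of the primitive of g on [0, x]
  have hPcont : ContinuousOn (fun s : ℝ => ∫ t in (0:ℝ)..s, g t) (uIcc (0:ℝ) x) :=
    intervalIntegral.continuousOn_primitive_interval (by
      rw [uIcc_of_le hx0]
      exact (integrableOn_Icc_iff_integrableOn_Ioc).mpr hgx.1)
  -- integrabilities
  have hi1 : IntervalIntegrable (fun t => Complex.exp (c * t) * g t) volume 0 x := by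
    refine (IntegrableOn.continuousOn_mul ?_ ?_ isCompact_uIcc).intervalIntegrable
    · exact hexpc.continuousOn
    · rw [uIcc_of_le hx0]
      exact (integrableOn_Icc_iff_integrableOn_Ioc).mpr hgx.1
  have hi2 : IntervalIntegrable (fun s => Complex.exp (c * s) * (c * k)) volume 0 x :=
    (hexpc.mul continuous_const).intervalIntegrable 0 x
  have hi3 : IntervalIntegrable
      (fun s => (∫ t in (0:ℝ)..s, g t) * (c * Complex.exp (c * s))) volume 0 x :=
    (ContinuousOn.mul hPcont hcexpc.continuousOn).intervalIntegrable
  have hi4 : IntervalIntegrable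
      (fun t => g t * (Complex.exp (c * x) - Complex.exp (c * t))) volume 0 x := by
    refine (IntegrableOn.mul_continuousOn ?_ ?_ isCompact_uIcc).intervalIntegrable
    · rw [uIcc_of_le hx0]
      exact (integrableOn_Icc_iff_integrableOn_Ioc).mpr hgx.1
    · exact (continuous_const.sub hexpc).continuousOn
  -- key expansion of exp(cx) * ∫ g
  have e1 : Complex.exp (c * x) * ∫ t in (0:ℝ)..x, g t
      = (∫ t in (0:ℝ)..x, Complex.exp (c * t) * g t)
        + ∫ s in (0:ℝ)..x, (∫ t in (0:ℝ)..s, g t) * (c * Complex.exp (c * s)) := by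
    have step1 : Complex.exp (c * x) * ∫ t in (0:ℝ)..x, g t
        = ∫ t in (0:ℝ)..x, (Complex.exp (c * t) * g t
            + g t * (Complex.exp (c * x) - Complex.exp (c * t))) := by
      rw [← intervalIntegral.integral_const_mul]
      exact intervalIntegral.integral_congr (fun t _ => by ring)
    rw [step1, intervalIntegral.integral_add hi1 hi4]
    congr 1
    have step2 : (∫ t in (0:ℝ)..x, g t * (Complex.exp (c * x) - Complex.exp (c * t)))
        = ∫ t in (0:ℝ)..x, g t * (∫ s in t..x, c * Complex.exp (c * s)) := by
      refine intervalIntegral.integral_congr (fun t ht => ?_)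
      congr 1
      have h0t : IntervalIntegrable (fun s => c * Complex.exp (c * s)) volume 0 t :=
        hcexpc.intervalIntegrable 0 t
      have htx : IntervalIntegrable (fun s => c * Complex.exp (c * s)) volume t x :=
        hcexpc.intervalIntegrable t x
      have := intervalIntegral.integral_add_adjacent_intervals h0t htx
      rw [hprim t, hprim x] at this
      linear_combination -this
    rw [step2]
    exact fubini_tri hx0 hgx.1 ((hcexpc.intervalIntegrable 0 x).1)
  -- assemble
  have e2 : Complex.exp (c * x) - 1 = ∫ s in (0:ℝ)..x, c * Complex.exp (c * s) :=
    (hprim x).symm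
  have e3 : (∫ s in (0:ℝ)..x, Complex.exp (c * s) * (g s + c * (k + ∫ t in (0:ℝ)..s, g t)))
      = (∫ t in (0:ℝ)..x, Complex.exp (c * t) * g t)
        + ((∫ s in (0:ℝ)..x, Complex.exp (c * s) * (c * k))
          + ∫ s in (0:ℝ)..x, (∫ t in (0:ℝ)..s, g t) * (c * Complex.exp (c * s))) := by
    rw [← intervalIntegral.integral_add hi2 hi3, ← intervalIntegral.integral_add hi1 (hi2.add hi3)]
    exact intervalIntegral.integral_congr (fun s _ => by ring)
  have e4 : (∫ s in (0:ℝ)..x, Complex.exp (c * s) * (c * k))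
      = (∫ s in (0:ℝ)..x, c * Complex.exp (c * s)) * k := by
    rw [← intervalIntegral.integral_mul_const]
    exact intervalIntegral.integral_congr (fun s _ => by ring)
  rw [e3, e4, ← e2]
  linear_combination e1 + (Complex.exp (c * x) - 1) * k

/-! ### Mid-level auxiliary lemmas -/

lemma norm_exp_bound {r : ℝ} (hr : 0 ≤ r) {μ : ℂ} (hμ : -r < μ.im) {t s : ℝ}
    (hts : t ≤ s) (h1 : s - t ≤ 1) :
    ‖Complex.exp (2 * Complex.I * μ * ((s : ℂ) - t))‖ ≤ Real.exp (2 * r) := by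
  have harg : ((s : ℂ) - t) = ((s - t : ℝ) : ℂ) := by push_cast; ring
  rw [harg, Complex.norm_exp]
  have hre : (2 * Complex.I * μ * ((s - t : ℝ) : ℂ)).re = -2 * μ.im * (s - t) := by
    simp [Complex.mul_re, Complex.mul_im]
    try ring
  rw [hre]
  apply Real.exp_le_exp.mpr
  have h2 : -μ.im ≤ r := by linarith
  have h3 : 0 ≤ s - t := by linarith
  nlinarith

/-- The operator `Q` appearing inside `K₁`. -/
def QQ (σ₂ : ℝ → ℂ) (μ : ℂ) (z : ℝ → ℂ) (y : ℝ) : ℂ :=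
  ∫ s in y..(1:ℝ), Complex.exp (2 * Complex.I * μ * (s - y)) * σ₂ s * z s

lemma K1_eq (σ₁ σ₂ : ℝ → ℂ) (μ : ℂ) (z : ℝ → ℂ) (x : ℝ) :
    K1 σ₁ σ₂ μ z x = ∫ t in (0:ℝ)..x, σ₁ t * QQ σ₂ μ z t := rfl

lemma norm_QQ_eFun (σ₂ : ℝ → ℂ) (μ : ℂ) (y : ℝ) :
    ‖QQ σ₂ μ eFun y‖ = gamma02 σ₂ μ y := by
  unfold QQ gamma02 eFun
  congr 1
  exact intervalIntegral.integral_congr fun s _ => by rw [mul_one]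

lemma QQ_eFun_eq (σ₂ : ℝ → ℂ) (μ : ℂ) (y : ℝ) :
    QQ σ₂ μ eFun y = Complex.exp (-(2 * Complex.I * μ * y))
      * ∫ s in y..(1:ℝ), Complex.exp (2 * Complex.I * μ * s) * σ₂ s := by
  unfold QQ
  rw [← intervalIntegral.integral_const_mul]
  refine intervalIntegral.integral_congr fun s _ => ?_
  have h : Complex.exp (2 * Complex.I * μ * ((s:ℂ) - y))
      = Complex.exp (-(2 * Complex.I * μ * y)) * Complex.exp (2 * Complex.I * μ * s) := by
    rw [← Complex.exp_add]; congr 1; ring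
  simp only [eFun, mul_one]
  rw [h]; ring

lemma QQ_tail (σ₂ : ℝ → ℂ) (μ : ℂ) (y t : ℝ) :
    (∫ s in t..(1:ℝ), Complex.exp (2 * Complex.I * μ * (s - y)) * σ₂ s)
      = Complex.exp (2 * Complex.I * μ * ((t:ℂ) - y)) * QQ σ₂ μ eFun t := by
  unfold QQ
  rw [← intervalIntegral.integral_const_mul]
  refine intervalIntegral.integral_congr fun s _ => ?_
  have h : Complex.exp (2 * Complex.I * μ * ((s:ℂ) - y))
      = Complex.exp (2 * Complex.I * μ * ((t:ℂ) - y))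
        * Complex.exp (2 * Complex.I * μ * ((s:ℂ) - t)) := by
    rw [← Complex.exp_add]; congr 1; ring
  simp only [eFun, mul_one]
  rw [h]; ring

/-- Expansion of `Q` applied to the primitive of `σ₁ V` (one Fubini swap). -/
lemma QQ_primitive (σ₁ σ₂ : ℝ → ℂ) (μ : ℂ) (V : ℝ → ℂ)
    (hσV : IntegrableOn (fun t => σ₁ t * V t) (Icc (0:ℝ) 1) volume)
    (hEσ : ∀ y ∈ Icc (0:ℝ) 1, IntegrableOn
      (fun s : ℝ => Complex.exp (2 * Complex.I * μ * ((s:ℂ) - y)) * σ₂ s) (Ioc y 1) volume)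
    (hI2 : ∀ y ∈ Icc (0:ℝ) 1, IntervalIntegrable
      (fun s : ℝ => Complex.exp (2 * Complex.I * μ * ((s:ℂ) - y)) * σ₂ s
        * ∫ t in y..s, σ₁ t * V t) volume y 1)
    {y : ℝ} (hy : y ∈ Icc (0:ℝ) 1) :
    QQ σ₂ μ (fun s => ∫ t in (0:ℝ)..s, σ₁ t * V t) y
      = (∫ t in (0:ℝ)..y, σ₁ t * V t) * QQ σ₂ μ eFun y
        + ∫ t in y..(1:ℝ), σ₁ t * V t
            * (Complex.exp (2 * Complex.I * μ * ((t:ℂ) - y)) * QQ σ₂ μ eFun t) := by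
  have hy1 : y ≤ 1 := hy.2
  have hII : ∀ {a b : ℝ}, a ∈ Icc (0:ℝ) 1 → b ∈ Icc (0:ℝ) 1 →
      IntervalIntegrable (fun t => σ₁ t * V t) volume a b := fun ha hb =>
    (hσV.mono_set (uIcc_subset_Icc ha hb)).intervalIntegrable
  have hIE : IntervalIntegrable
      (fun s : ℝ => Complex.exp (2 * Complex.I * μ * ((s:ℂ) - y)) * σ₂ s) volume y 1 := by
    rw [intervalIntegrable_iff_integrableOn_Ioc_of_le hy1]
    exact hEσ y hy
  have hI1 : IntervalIntegrable
      (fun s : ℝ => Complex.exp (2 * Complex.I * μ * ((s:ℂ) - y)) * σ₂ s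
        * ∫ t in (0:ℝ)..y, σ₁ t * V t) volume y 1 := hIE.mul_const _
  have step1 : QQ σ₂ μ (fun s => ∫ t in (0:ℝ)..s, σ₁ t * V t) y
      = ∫ s in y..(1:ℝ), (Complex.exp (2 * Complex.I * μ * ((s:ℂ) - y)) * σ₂ s
          * ∫ t in (0:ℝ)..y, σ₁ t * V t)
        + Complex.exp (2 * Complex.I * μ * ((s:ℂ) - y)) * σ₂ s
          * ∫ t in y..s, σ₁ t * V t := by
    unfold QQ
    refine intervalIntegral.integral_congr fun s hs => ?_
    rw [uIcc_of_le hy1] at hs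
    have hsm : s ∈ Icc (0:ℝ) 1 := ⟨le_trans hy.1 hs.1, hs.2⟩
    have hadd := intervalIntegral.integral_add_adjacent_intervals
      (hII ⟨le_rfl, zero_le_one⟩ hy) (hII hy hsm)
    beta_reduce
    rw [← hadd]; ring
  rw [step1, intervalIntegral.integral_add hI1 (hI2 y hy)]
  congr 1
  · rw [intervalIntegral.integral_mul_const, mul_comm]
    congr 1
    unfold QQ
    exact intervalIntegral.integral_congr fun s _ => by simp [eFun]
  · have hf : IntegrableOn (fun t => σ₁ t * V t) (Ioc y 1) volume :=
      hσV.mono_set (fun z hz => ⟨le_trans hy.1 hz.1.le, hz.2⟩)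
    calc (∫ s in y..(1:ℝ), Complex.exp (2 * Complex.I * μ * ((s:ℂ) - y)) * σ₂ s
            * ∫ t in y..s, σ₁ t * V t)
        = ∫ s in y..(1:ℝ), (∫ t in y..s, σ₁ t * V t)
            * (Complex.exp (2 * Complex.I * μ * ((s:ℂ) - y)) * σ₂ s) :=
          intervalIntegral.integral_congr fun s _ => by ring
      _ = ∫ t in y..(1:ℝ), (σ₁ t * V t)
            * ∫ s in t..(1:ℝ), Complex.exp (2 * Complex.I * μ * ((s:ℂ) - y)) * σ₂ s :=
          (fubini_tri hy1 hf (hEσ y hy)).symm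
      _ = ∫ t in y..(1:ℝ), σ₁ t * V t
            * (Complex.exp (2 * Complex.I * μ * ((t:ℂ) - y)) * QQ σ₂ μ eFun t) := by
          refine intervalIntegral.integral_congr fun t _ => ?_
          rw [QQ_tail]

/-- The basic representation of `e^{-iμy} w₁(y)` (equation E1). -/
lemma solution_E1 (σ₁ : ℝ → ℂ) (μ : ℂ) (g₁ : ℝ → ℂ) (W₁ W₂ : ℝ → ℂ)
    (hg₁i : IntervalIntegrable g₁ volume 0 1)
    (hW₁ : ∀ y, W₁ y = 1 + ∫ t in (0:ℝ)..y, g₁ t)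
    (hae : ∀ᵐ s ∂(volume.restrict (Icc (0:ℝ) 1)),
      g₁ s + σ₁ s * W₂ s = Complex.I * μ * W₁ s)
    {y : ℝ} (hy : y ∈ Icc (0:ℝ) 1) :
    Complex.exp (-(Complex.I * μ * y)) * W₁ y
      = 1 - ∫ t in (0:ℝ)..y, σ₁ t * (Complex.exp (-(Complex.I * μ * t)) * W₂ t) := by
  have h0 := expPrim (-(Complex.I * μ)) 1 hg₁i hy
  have harg : ∀ z : ℝ, -(Complex.I * μ) * (z:ℂ) = -(Complex.I * μ * z) := fun z => by ring
  have haeI : ∀ᵐ s ∂volume, s ∈ Set.uIoc (0:ℝ) y →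
      Complex.exp (-(Complex.I * μ) * s)
        * (g₁ s + -(Complex.I * μ) * (1 + ∫ t in (0:ℝ)..s, g₁ t))
      = -(σ₁ s * (Complex.exp (-(Complex.I * μ * s)) * W₂ s)) := by
    have h₁ := (ae_restrict_iff' measurableSet_Icc).mp hae
    filter_upwards [h₁] with s hs hsmem
    have hsIcc : s ∈ Icc (0:ℝ) 1 := by
      rw [Set.uIoc_of_le hy.1] at hsmem
      exact ⟨hsmem.1.le, le_trans hsmem.2 hy.2⟩
    have hodes := hs hsIcc
    rw [harg s, ← hW₁ s]
    linear_combination Complex.exp (-(Complex.I * μ * s)) * hodes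
  rw [intervalIntegral.integral_congr_ae haeI] at h0
  rw [intervalIntegral.integral_neg] at h0
  rw [hW₁ y, ← harg y]
  linear_combination h0

/-- The basic representation for the second component (equation E2, before boundary). -/
lemma solution_E2 (σ₂ : ℝ → ℂ) (μ : ℂ) (g₂ : ℝ → ℂ) (W₁ W₂ : ℝ → ℂ)
    (hg₂i : IntervalIntegrable g₂ volume 0 1)
    (hW₂ : ∀ y, W₂ y = W₂ 0 + ∫ t in (0:ℝ)..y, g₂ t)
    (hae : ∀ᵐ s ∂(volume.restrict (Icc (0:ℝ) 1)),
      g₂ s + σ₂ s * W₁ s = -(Complex.I * μ) * W₂ s)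
    {y : ℝ} (hy : y ∈ Icc (0:ℝ) 1) :
    Complex.exp (Complex.I * μ * y) * W₂ y
      = W₂ 0 - ∫ t in (0:ℝ)..y, Complex.exp (Complex.I * μ * t) * (σ₂ t * W₁ t) := by
  have h0 := expPrim (Complex.I * μ) (W₂ 0) hg₂i hy
  have harg : ∀ z : ℝ, (Complex.I * μ) * (z:ℂ) = Complex.I * μ * z := fun z => rfl
  have haeI : ∀ᵐ s ∂volume, s ∈ Set.uIoc (0:ℝ) y →
      Complex.exp (Complex.I * μ * s)
        * (g₂ s + (Complex.I * μ) * (W₂ 0 + ∫ t in (0:ℝ)..s, g₂ t))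
      = -(Complex.exp (Complex.I * μ * s) * (σ₂ s * W₁ s)) := by
    have h₁ := (ae_restrict_iff' measurableSet_Icc).mp hae
    filter_upwards [h₁] with s hs hsmem
    have hsIcc : s ∈ Icc (0:ℝ) 1 := by
      rw [Set.uIoc_of_le hy.1] at hsmem
      exact ⟨hsmem.1.le, le_trans hsmem.2 hy.2⟩
    have hodes := hs hsIcc
    rw [← hW₂ s]
    linear_combination Complex.exp (Complex.I * μ * s) * hodes
  rw [intervalIntegral.integral_congr_ae haeI] at h0
  rw [intervalIntegral.integral_neg] at h0
  rw [hW₂ y]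
  linear_combination h0

/-- The main constant in the intermediate estimate. -/
def Cone (σ₁ σ₂ : ℝ → ℂ) (p : ℝ≥0∞) (r : ℝ) : ℝ :=
  sigmaNorm σ₁ σ₂ p * (1 + sigmaNorm σ₁ σ₂ p * (Real.exp (2*r) * (sigmaNorm σ₁ σ₂ p *
        (2 * (1 + Real.exp (2*r) * (sigmaNorm σ₁ σ₂ p)^2))))
      + Real.exp (2*r) * (sigmaNorm σ₁ σ₂ p * (Real.exp (2*r) * (sigmaNorm σ₁ σ₂ p *
        (2 * (1 + Real.exp (2*r) * (sigmaNorm σ₁ σ₂ p)^2))))))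
  + Real.exp (2*r) * (sigmaNorm σ₁ σ₂ p * (1 + sigmaNorm σ₁ σ₂ p * (Real.exp (2*r) *
      (sigmaNorm σ₁ σ₂ p * (2 * (1 + Real.exp (2*r) * (sigmaNorm σ₁ σ₂ p)^2))))
      + Real.exp (2*r) * (sigmaNorm σ₁ σ₂ p * (Real.exp (2*r) * (sigmaNorm σ₁ σ₂ p *
        (2 * (1 + Real.exp (2*r) * (sigmaNorm σ₁ σ₂ p)^2)))))))

lemma sigmaNorm_nonneg (σ₁ σ₂ : ℝ → ℂ) (p : ℝ≥0∞) : 0 ≤ sigmaNorm σ₁ σ₂ p :=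
  ENNReal.toReal_nonneg

lemma Cone_nonneg (σ₁ σ₂ : ℝ → ℂ) (p : ℝ≥0∞) (r : ℝ) : 0 ≤ Cone σ₁ σ₂ p r := by
  have h1 := sigmaNorm_nonneg σ₁ σ₂ p
  have h2 := Real.exp_nonneg (2*r)
  unfold Cone
  positivity

lemma gammaT_nonneg (σ₁ σ₂ : ℝ → ℂ) (μ : ℂ) : 0 ≤ gammaT σ₁ σ₂ μ := by
  unfold gammaT
  have h1 : (0:ℝ) ≤ ∫ s in (0:ℝ)..1, ‖σ₂ s‖ * gamma01 σ₁ μ s ^ 2 := by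
    apply intervalIntegral.integral_nonneg zero_le_one
    intro t _
    unfold gamma01
    positivity
  have h2 : (0:ℝ) ≤ ∫ s in (0:ℝ)..1, ‖σ₁ s‖ * gamma02 σ₂ μ s ^ 2 := by
    apply intervalIntegral.integral_nonneg zero_le_one
    intro t _
    unfold gamma02
    positivity
  linarith

set_option maxHeartbeats 1000000 in
/-- The central quantitative estimate. -/
lemma core_est (p q : ℝ≥0∞) (hp1 : 1 ≤ p) (hpq : 1/p + 1/q = 1)
    (σ₁ σ₂ : ℝ → ℂ) (hσ₁m : Measurable σ₁) (hσ₂m : Measurable σ₂)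
    (hσ₁ : MemLp σ₁ p (volume.restrict (Icc (0:ℝ) 1)))
    (hσ₂ : MemLp σ₂ p (volume.restrict (Icc (0:ℝ) 1)))
    {r : ℝ} (hr : 0 ≤ r) {μ : ℂ} (hμim : -r < μ.im)
    (hγ2 : gamma2 σ₂ q μ ≤ 1 / (2 * (2 * Real.exp (4*r) * (sigmaNorm σ₁ σ₂ p)^3)))
    (u V : ℝ → ℂ)
    (hucont : ContinuousOn u (Icc (0:ℝ) 1)) (hVcont : ContinuousOn V (Icc (0:ℝ) 1))
    (hu : ∀ y ∈ Icc (0:ℝ) 1, u y = 1 - ∫ t in (0:ℝ)..y, σ₁ t * V t)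
    (hV : ∀ y ∈ Icc (0:ℝ) 1, V y = QQ σ₂ μ u y) :
    ∀ y ∈ Icc (0:ℝ) 1,
      ‖u y - 1 + K1 σ₁ σ₂ μ eFun y‖ ≤ Cone σ₁ σ₂ p r * gammaT σ₁ σ₂ μ := by
  have h01 : (0:ℝ) ≤ 1 := zero_le_one
  have hm0 : (0:ℝ) ∈ Icc (0:ℝ) 1 := ⟨le_rfl, h01⟩
  have hm1 : (1:ℝ) ∈ Icc (0:ℝ) 1 := ⟨h01, le_rfl⟩
  haveI hfin : IsFiniteMeasure (volume.restrict (Icc (0:ℝ) 1)) :=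
    ⟨by rw [Measure.restrict_apply_univ, Real.volume_Icc]; exact ENNReal.ofReal_lt_top⟩
  have hσ₁int : IntegrableOn σ₁ (Icc (0:ℝ) 1) volume := hσ₁.integrable hp1
  have hσ₂int : IntegrableOn σ₂ (Icc (0:ℝ) 1) volume := hσ₂.integrable hp1
  -- exp-kernel bound
  set ce := Real.exp (2*r) with hce
  have hce1 : 1 ≤ ce := by rw [hce]; exact Real.one_le_exp (by linarith)
  have hce0 : (0:ℝ) ≤ ce := le_trans zero_le_one hce1
  have hEb : ∀ {t s : ℝ}, t ∈ Icc (0:ℝ) 1 → s ∈ Icc (0:ℝ) 1 → t ≤ s →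
      ‖Complex.exp (2 * Complex.I * μ * ((s:ℂ) - t))‖ ≤ ce := by
    intro t s ht hs hts
    rw [hce]
    exact norm_exp_bound hr hμim hts (by linarith [ht.1, hs.2])
  -- continuity of Qe := QQ σ₂ μ eFun
  have hexpσ : IntegrableOn (fun s : ℝ => Complex.exp (2 * Complex.I * μ * s) * σ₂ s)
      (Icc (0:ℝ) 1) volume := by
    apply IntegrableOn.continuousOn_mul ?_ hσ₂int isCompact_Icc
    exact Continuous.continuousOn (by fun_prop)
  have hIIexpσ : ∀ {a b : ℝ}, a ∈ Icc (0:ℝ) 1 → b ∈ Icc (0:ℝ) 1 →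
      IntervalIntegrable (fun s : ℝ => Complex.exp (2 * Complex.I * μ * s) * σ₂ s)
        volume a b := fun ha hb =>
    (hexpσ.mono_set (uIcc_subset_Icc ha hb)).intervalIntegrable
  have hQeeqF : ∀ y ∈ Icc (0:ℝ) 1, QQ σ₂ μ eFun y
      = Complex.exp (-(2 * Complex.I * μ * y))
        * ((∫ s in (0:ℝ)..1, Complex.exp (2 * Complex.I * μ * s) * σ₂ s)
          - ∫ s in (0:ℝ)..y, Complex.exp (2 * Complex.I * μ * s) * σ₂ s) := by
    intro y hy
    rw [QQ_eFun_eq]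
    congr 1
    exact (intervalIntegral.integral_interval_sub_left (hIIexpσ hm0 hm1) (hIIexpσ hm0 hy)).symm
  have hQecont : ContinuousOn (QQ σ₂ μ eFun) (Icc (0:ℝ) 1) := by
    have hprim : ContinuousOn (fun y : ℝ => ∫ s in (0:ℝ)..y,
        Complex.exp (2 * Complex.I * μ * s) * σ₂ s) (Icc (0:ℝ) 1) := by
      have := intervalIntegral.continuousOn_primitive_interval
        (f := fun s : ℝ => Complex.exp (2 * Complex.I * μ * s) * σ₂ s) (μ := volume)
        (a := 0) (b := 1) ?_
      · rwa [uIcc_of_le h01] at this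
      · rw [uIcc_of_le h01]
        exact (integrableOn_Icc_iff_integrableOn_Ioc).mpr
          (hexpσ.mono_set Ioc_subset_Icc_self)
    have hc : ContinuousOn (fun y : ℝ => Complex.exp (-(2 * Complex.I * μ * y))
        * ((∫ s in (0:ℝ)..1, Complex.exp (2 * Complex.I * μ * s) * σ₂ s)
          - ∫ s in (0:ℝ)..y, Complex.exp (2 * Complex.I * μ * s) * σ₂ s)) (Icc (0:ℝ) 1) := by
      apply ContinuousOn.mul
      · exact Continuous.continuousOn (by fun_prop)
      · exact continuousOn_const.sub hprim
    exact ContinuousOn.congr hc (fun y hy => hQeeqF y hy)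
  have hgQc : ContinuousOn (gamma02 σ₂ μ) (Icc (0:ℝ) 1) :=
    ContinuousOn.congr hQecont.norm (fun y _ => (norm_QQ_eFun σ₂ μ y).symm)
  have hgQ0 : ∀ y : ℝ, 0 ≤ gamma02 σ₂ μ y := fun y =>
    (norm_QQ_eFun σ₂ μ y) ▸ norm_nonneg _
  -- integrable products
  have hσVint : IntegrableOn (fun t => σ₁ t * V t) (Icc (0:ℝ) 1) volume :=
    hσ₁int.mul_continuousOn hVcont isCompact_Icc
  have hσQeint : IntegrableOn (fun t => σ₁ t * QQ σ₂ μ eFun t) (Icc (0:ℝ) 1) volume :=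
    hσ₁int.mul_continuousOn hQecont isCompact_Icc
  have hQeVcont : ContinuousOn (fun t => QQ σ₂ μ eFun t - V t) (Icc (0:ℝ) 1) :=
    hQecont.sub hVcont
  have hIIσV : ∀ {a b : ℝ}, a ∈ Icc (0:ℝ) 1 → b ∈ Icc (0:ℝ) 1 →
      IntervalIntegrable (fun t => σ₁ t * V t) volume a b := fun ha hb =>
    (hσVint.mono_set (uIcc_subset_Icc ha hb)).intervalIntegrable
  have hIIσQe : ∀ {a b : ℝ}, a ∈ Icc (0:ℝ) 1 → b ∈ Icc (0:ℝ) 1 →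
      IntervalIntegrable (fun t => σ₁ t * QQ σ₂ μ eFun t) volume a b := fun ha hb =>
    (hσQeint.mono_set (uIcc_subset_Icc ha hb)).intervalIntegrable
  have hσ₁n : IntegrableOn (fun t => ‖σ₁ t‖) (Icc (0:ℝ) 1) volume := hσ₁int.norm
  have hσ₂n : IntegrableOn (fun t => ‖σ₂ t‖) (Icc (0:ℝ) 1) volume := hσ₂int.norm
  have hmkR : ∀ (h : ℝ → ℝ), ContinuousOn h (Icc (0:ℝ) 1) → ∀ {a b : ℝ},
      a ∈ Icc (0:ℝ) 1 → b ∈ Icc (0:ℝ) 1 →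
      IntervalIntegrable (fun t => ‖σ₁ t‖ * h t) volume a b := by
    intro h hh a b ha hb
    have : IntegrableOn (fun t => ‖σ₁ t‖ * h t) (Icc (0:ℝ) 1) volume :=
      hσ₁n.mul_continuousOn hh isCompact_Icc
    exact (this.mono_set (uIcc_subset_Icc ha hb)).intervalIntegrable
  have hIIn2 : ∀ {a b : ℝ}, a ∈ Icc (0:ℝ) 1 → b ∈ Icc (0:ℝ) 1 →
      IntervalIntegrable (fun t => ‖σ₂ t‖) volume a b := fun ha hb =>
    (hσ₂n.mono_set (uIcc_subset_Icc ha hb)).intervalIntegrable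
  -- scalar quantities
  set sN := sigmaNorm σ₁ σ₂ p with hsN
  have hsN0 : 0 ≤ sN := ENNReal.toReal_nonneg
  set γ2 := gamma2 σ₂ q μ with hγ2d
  have hγ20 : 0 ≤ γ2 := ENNReal.toReal_nonneg
  set B := ∫ t in (0:ℝ)..1, ‖σ₁ t‖ with hB
  set S := ∫ t in (0:ℝ)..1, ‖σ₂ t‖ with hS
  set A2 := ∫ t in (0:ℝ)..1, ‖σ₁ t‖ * gamma02 σ₂ μ t with hA2
  set g2 := ∫ t in (0:ℝ)..1, ‖σ₁ t‖ * gamma02 σ₂ μ t ^ 2 with hg2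
  set U := ∫ t in (0:ℝ)..1, ‖σ₁ t‖ * ‖V t‖ with hU
  set T := ∫ t in (0:ℝ)..1, ‖σ₁ t‖ * (gamma02 σ₂ μ t * ‖V t‖) with hT
  have hB0 : 0 ≤ B := intervalIntegral.integral_nonneg h01 (fun t _ => norm_nonneg _)
  have hS0 : 0 ≤ S := intervalIntegral.integral_nonneg h01 (fun t _ => norm_nonneg _)
  have hA20 : 0 ≤ A2 := intervalIntegral.integral_nonneg h01
    (fun t _ => mul_nonneg (norm_nonneg _) (hgQ0 t))
  have hg20 : 0 ≤ g2 := intervalIntegral.integral_nonneg h01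
    (fun t _ => mul_nonneg (norm_nonneg _) (pow_nonneg (hgQ0 t) 2))
  have hU0 : 0 ≤ U := intervalIntegral.integral_nonneg h01
    (fun t _ => mul_nonneg (norm_nonneg _) (norm_nonneg _))
  have hT0 : 0 ≤ T := intervalIntegral.integral_nonneg h01
    (fun t _ => mul_nonneg (norm_nonneg _) (mul_nonneg (hgQ0 t) (norm_nonneg _)))
  -- sups
  set Mu := sSup ((fun y => ‖u y‖) '' Icc (0:ℝ) 1) with hMu
  set MV := sSup ((fun y => ‖V y‖) '' Icc (0:ℝ) 1) with hMV
  have hMuB : ∀ y ∈ Icc (0:ℝ) 1, ‖u y‖ ≤ Mu := fun y hy =>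
    le_csSup (isCompact_Icc.image_of_continuousOn hucont.norm).bddAbove ⟨y, hy, rfl⟩
  have hMVB : ∀ y ∈ Icc (0:ℝ) 1, ‖V y‖ ≤ MV := fun y hy =>
    le_csSup (isCompact_Icc.image_of_continuousOn hVcont.norm).bddAbove ⟨y, hy, rfl⟩
  have hMuLe : ∀ c : ℝ, (∀ y ∈ Icc (0:ℝ) 1, ‖u y‖ ≤ c) → Mu ≤ c := by
    intro c h
    apply csSup_le ((nonempty_Icc.mpr h01).image _)
    rintro z ⟨y, hy, rfl⟩
    exact h y hy
  have hMVLe : ∀ c : ℝ, (∀ y ∈ Icc (0:ℝ) 1, ‖V y‖ ≤ c) → MV ≤ c := by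
    intro c h
    apply csSup_le ((nonempty_Icc.mpr h01).image _)
    rintro z ⟨y, hy, rfl⟩
    exact h y hy
  have hMu0 : 0 ≤ Mu := le_trans (norm_nonneg (u 0)) (hMuB 0 hm0)
  have hMV0 : 0 ≤ MV := le_trans (norm_nonneg (V 0)) (hMVB 0 hm0)
  -- pointwise bound on gamma02
  have hgQb : ∀ y ∈ Icc (0:ℝ) 1, gamma02 σ₂ μ y ≤ ce * S := by
    intro y hy
    rw [← norm_QQ_eFun]
    have h1 : ‖QQ σ₂ μ eFun y‖ ≤ ∫ s in y..(1:ℝ),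
        ‖Complex.exp (2 * Complex.I * μ * ((s:ℂ) - y)) * σ₂ s * eFun s‖ :=
      intervalIntegral.norm_integral_le_integral_norm hy.2
    have hIIQ : IntervalIntegrable
        (fun s : ℝ => Complex.exp (2 * Complex.I * μ * ((s:ℂ) - y)) * σ₂ s * eFun s)
        volume y 1 := by
      have : IntegrableOn
          (fun s : ℝ => Complex.exp (2 * Complex.I * μ * ((s:ℂ) - y)) * σ₂ s * eFun s)
          (Icc (0:ℝ) 1) volume := by
        have h2 : IntegrableOn
            (fun s : ℝ => Complex.exp (2 * Complex.I * μ * ((s:ℂ) - y)) * σ₂ s)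
            (Icc (0:ℝ) 1) volume := by
          apply IntegrableOn.continuousOn_mul ?_ hσ₂int isCompact_Icc
          exact Continuous.continuousOn (by fun_prop)
        exact h2.congr_fun (fun s _ => by simp [eFun]) measurableSet_Icc
      exact (this.mono_set (uIcc_subset_Icc hy hm1)).intervalIntegrable
    have h2 : (∫ s in y..(1:ℝ),
        ‖Complex.exp (2 * Complex.I * μ * ((s:ℂ) - y)) * σ₂ s * eFun s‖)
        ≤ ∫ s in y..(1:ℝ), ce * ‖σ₂ s‖ := by
      apply intervalIntegral.integral_mono_on hy.2 hIIQ.norm ((hIIn2 hy hm1).const_mul ce)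
      intro s hs
      have hsm : s ∈ Icc (0:ℝ) 1 := ⟨le_trans hy.1 hs.1, hs.2⟩
      calc ‖Complex.exp (2 * Complex.I * μ * ((s:ℂ) - y)) * σ₂ s * eFun s‖
          = ‖Complex.exp (2 * Complex.I * μ * ((s:ℂ) - y))‖ * ‖σ₂ s‖ := by
            simp [eFun, norm_mul]
        _ ≤ ce * ‖σ₂ s‖ := mul_le_mul_of_nonneg_right (hEb hy hsm hs.1) (norm_nonneg _)
    have h3 : (∫ s in y..(1:ℝ), ce * ‖σ₂ s‖) ≤ ce * S := by
      rw [intervalIntegral.integral_const_mul]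
      apply mul_le_mul_of_nonneg_left ?_ hce0
      apply intervalIntegral.integral_mono_interval hy.1 hy.2 le_rfl
        (Filter.Eventually.of_forall fun t => norm_nonneg _) (hIIn2 hm0 hm1)
    linarith
    -- ### Hölder-type facts
  haveI hprob : IsProbabilityMeasure (volume.restrict (Icc (0:ℝ) 1)) :=
    ⟨by rw [Measure.restrict_apply_univ, Real.volume_Icc]; norm_num⟩
  have hmaxmem : MemLp (fun t => max ‖σ₁ t‖ ‖σ₂ t‖) p (volume.restrict (Icc (0:ℝ) 1)) := by
    apply MemLp.of_le (hσ₁.norm.add hσ₂.norm)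
      ((hσ₁m.norm.max hσ₂m.norm).aestronglyMeasurable)
    apply Filter.Eventually.of_forall
    intro t
    have h1 : (0:ℝ) ≤ max ‖σ₁ t‖ ‖σ₂ t‖ := le_trans (norm_nonneg _) (le_max_left _ _)
    rw [Real.norm_of_nonneg h1]
    calc max ‖σ₁ t‖ ‖σ₂ t‖ ≤ ‖σ₁ t‖ + ‖σ₂ t‖ :=
          max_le (le_add_of_nonneg_right (norm_nonneg _)) (le_add_of_nonneg_left (norm_nonneg _))
      _ ≤ ‖‖σ₁ t‖ + ‖σ₂ t‖‖ := le_abs_self _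
  have hnorm_int_eq : ∀ (f : ℝ → ℂ), AEStronglyMeasurable f (volume.restrict (Icc (0:ℝ) 1)) →
      (∫ t in Icc (0:ℝ) 1, ‖f t‖)
        = (eLpNorm f 1 (volume.restrict (Icc (0:ℝ) 1))).toReal := by
    intro f hf
    rw [eLpNorm_one_eq_lintegral_enorm,
      integral_eq_lintegral_of_nonneg_ae (Filter.Eventually.of_forall fun t => norm_nonneg _)
        hf.norm]
    congr 1
    exact lintegral_congr fun t => ofReal_norm_eq_enorm (f t)
  have hBsN : B ≤ sN := by
    have h1 : B = ∫ t in Icc (0:ℝ) 1, ‖σ₁ t‖ := by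
      rw [hB, intervalIntegral.integral_of_le h01, ← integral_Icc_eq_integral_Ioc]
    rw [h1, hnorm_int_eq σ₁ hσ₁.1, hsN]
    unfold sigmaNorm
    apply ENNReal.toReal_mono hmaxmem.eLpNorm_ne_top
    calc eLpNorm σ₁ 1 (volume.restrict (Icc (0:ℝ) 1))
        ≤ eLpNorm σ₁ p (volume.restrict (Icc (0:ℝ) 1)) :=
          eLpNorm_le_eLpNorm_of_exponent_le hp1 hσ₁.1
      _ ≤ eLpNorm (fun t => max ‖σ₁ t‖ ‖σ₂ t‖) p (volume.restrict (Icc (0:ℝ) 1)) :=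
          eLpNorm_mono fun t => (le_max_left _ _).trans (le_abs_self _)
  have hSsN : S ≤ sN := by
    have h1 : S = ∫ t in Icc (0:ℝ) 1, ‖σ₂ t‖ := by
      rw [hS, intervalIntegral.integral_of_le h01, ← integral_Icc_eq_integral_Ioc]
    rw [h1, hnorm_int_eq σ₂ hσ₂.1, hsN]
    unfold sigmaNorm
    apply ENNReal.toReal_mono hmaxmem.eLpNorm_ne_top
    calc eLpNorm σ₂ 1 (volume.restrict (Icc (0:ℝ) 1))
        ≤ eLpNorm σ₂ p (volume.restrict (Icc (0:ℝ) 1)) :=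
          eLpNorm_le_eLpNorm_of_exponent_le hp1 hσ₂.1
      _ ≤ eLpNorm (fun t => max ‖σ₁ t‖ ‖σ₂ t‖) p (volume.restrict (Icc (0:ℝ) 1)) :=
          eLpNorm_mono fun t => (le_max_right _ _).trans (le_abs_self _)
  have hgQaesm : AEStronglyMeasurable (gamma02 σ₂ μ) (volume.restrict (Icc (0:ℝ) 1)) :=
    hgQc.aestronglyMeasurable measurableSet_Icc
  have hgmem : MemLp (gamma02 σ₂ μ) q (volume.restrict (Icc (0:ℝ) 1)) := by
    refine MemLp.mono_exponent ?_ le_top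
    apply memLp_top_of_bound hgQaesm (ce * S)
    apply (ae_restrict_iff' measurableSet_Icc).mpr
    apply Filter.Eventually.of_forall
    intro y hy
    rw [Real.norm_of_nonneg (hgQ0 y)]
    exact hgQb y hy
  have hA2γ : A2 ≤ sN * γ2 := by
    have h1 : A2 = ∫ t in Icc (0:ℝ) 1, ‖σ₁ t‖ * gamma02 σ₂ μ t := by
      rw [hA2, intervalIntegral.integral_of_le h01, ← integral_Icc_eq_integral_Ioc]
    have h2 : (∫ t in Icc (0:ℝ) 1, ‖σ₁ t‖ * gamma02 σ₂ μ t)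
        = (eLpNorm (fun t => ‖σ₁ t‖ * gamma02 σ₂ μ t) 1 (volume.restrict (Icc (0:ℝ) 1))).toReal := by
      rw [eLpNorm_one_eq_lintegral_enorm,
        integral_eq_lintegral_of_nonneg_ae (Filter.Eventually.of_forall fun t =>
          mul_nonneg (norm_nonneg _) (hgQ0 t)) (hσ₁.1.norm.mul hgQaesm)]
      congr 1
      exact lintegral_congr fun t =>
        (Real.enorm_eq_ofReal (mul_nonneg (norm_nonneg (σ₁ t)) (hgQ0 t))).symm
    have h3 : eLpNorm (fun t => ‖σ₁ t‖ * gamma02 σ₂ μ t) 1 (volume.restrict (Icc (0:ℝ) 1))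
        ≤ eLpNorm (fun t => ‖σ₁ t‖) p (volume.restrict (Icc (0:ℝ) 1))
          * eLpNorm (gamma02 σ₂ μ) q (volume.restrict (Icc (0:ℝ) 1)) := by
      haveI : ENNReal.HolderTriple p q 1 := ⟨by simpa [one_div] using hpq⟩
      have := eLpNorm_le_eLpNorm_mul_eLpNorm'_of_norm (p := p) (q := q) (r := 1) hσ₁.1.norm hgQaesm (fun a b => a * b) 1
        (Filter.Eventually.of_forall fun t => by simp [norm_mul])
      rwa [ENNReal.coe_one, one_mul] at this
    have h4 : eLpNorm (fun t => ‖σ₁ t‖) p (volume.restrict (Icc (0:ℝ) 1))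
        ≤ eLpNorm (fun t => max ‖σ₁ t‖ ‖σ₂ t‖) p (volume.restrict (Icc (0:ℝ) 1)) := by
      rw [eLpNorm_norm]
      exact eLpNorm_mono fun t => (le_max_left _ _).trans (le_abs_self _)
    rw [h1, h2]
    calc (eLpNorm (fun t => ‖σ₁ t‖ * gamma02 σ₂ μ t) 1 (volume.restrict (Icc (0:ℝ) 1))).toReal
        ≤ ((eLpNorm (fun t => max ‖σ₁ t‖ ‖σ₂ t‖) p (volume.restrict (Icc (0:ℝ) 1)))
            * eLpNorm (gamma02 σ₂ μ) q (volume.restrict (Icc (0:ℝ) 1))).toReal := by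
          apply ENNReal.toReal_mono
            (ENNReal.mul_ne_top hmaxmem.eLpNorm_ne_top hgmem.eLpNorm_ne_top)
          exact h3.trans (mul_le_mul_left h4 _)
      _ = sN * γ2 := by
          rw [ENNReal.toReal_mul, hsN, hγ2d]
          rfl
  -- Cauchy–Schwarz : A2 * A2 ≤ B * g2
  have hCS : A2 * A2 ≤ B * g2 := by
    have hm2 : Real.HolderConjugate 2 2 := Real.HolderConjugate.two_two
    have haesm1 : AEStronglyMeasurable (fun t => Real.sqrt ‖σ₁ t‖)
        (volume.restrict (Ioc (0:ℝ) 1)) :=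
      (Real.continuous_sqrt.measurable.comp hσ₁m.norm).aestronglyMeasurable
    have haesm2 : AEStronglyMeasurable (fun t => Real.sqrt ‖σ₁ t‖ * gamma02 σ₂ μ t)
        (volume.restrict (Ioc (0:ℝ) 1)) := by
      apply haesm1.mul
      exact (hgQc.mono Ioc_subset_Icc_self).aestronglyMeasurable measurableSet_Ioc
    have hint1 : IntegrableOn (fun t => ‖σ₁ t‖) (Ioc (0:ℝ) 1) volume :=
      hσ₁n.mono_set Ioc_subset_Icc_self
    have hint2 : IntegrableOn (fun t => ‖σ₁ t‖ * gamma02 σ₂ μ t ^ 2) (Ioc (0:ℝ) 1) volume :=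
      (hσ₁n.mul_continuousOn (hgQc.pow 2) isCompact_Icc).mono_set Ioc_subset_Icc_self
    have hf2 : MemLp (fun t => Real.sqrt ‖σ₁ t‖) (ENNReal.ofReal 2)
        (volume.restrict (Ioc (0:ℝ) 1)) := by
      rw [show ENNReal.ofReal (2:ℝ) = 2 by norm_num]
      rw [memLp_two_iff_integrable_sq haesm1]
      exact hint1.congr (Filter.Eventually.of_forall fun t => by
        beta_reduce
        rw [Real.sq_sqrt (norm_nonneg _)])
    have hg2' : MemLp (fun t => Real.sqrt ‖σ₁ t‖ * gamma02 σ₂ μ t) (ENNReal.ofReal 2)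
        (volume.restrict (Ioc (0:ℝ) 1)) := by
      rw [show ENNReal.ofReal (2:ℝ) = 2 by norm_num]
      rw [memLp_two_iff_integrable_sq haesm2]
      exact hint2.congr (Filter.Eventually.of_forall fun t => by
        beta_reduce
        rw [mul_pow, Real.sq_sqrt (norm_nonneg _)])
    have hH := integral_mul_le_Lp_mul_Lq_of_nonneg hm2
      (Filter.Eventually.of_forall fun t => Real.sqrt_nonneg _)
      (Filter.Eventually.of_forall fun t => mul_nonneg (Real.sqrt_nonneg _) (hgQ0 t))
      hf2 hg2'
    have e1 : (∫ t in Ioc (0:ℝ) 1, Real.sqrt ‖σ₁ t‖ * (Real.sqrt ‖σ₁ t‖ * gamma02 σ₂ μ t))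
        = A2 := by
      rw [hA2, intervalIntegral.integral_of_le h01]
      refine setIntegral_congr_fun measurableSet_Ioc fun t _ => ?_
      rw [← mul_assoc, Real.mul_self_sqrt (norm_nonneg _)]
    have e2 : (∫ t in Ioc (0:ℝ) 1, Real.sqrt ‖σ₁ t‖ ^ (2:ℝ)) = B := by
      rw [hB, intervalIntegral.integral_of_le h01]
      refine setIntegral_congr_fun measurableSet_Ioc fun t _ => ?_
      rw [Real.rpow_two, Real.sq_sqrt (norm_nonneg _)]
    have e3 : (∫ t in Ioc (0:ℝ) 1, (Real.sqrt ‖σ₁ t‖ * gamma02 σ₂ μ t) ^ (2:ℝ)) = g2 := by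
      rw [hg2, intervalIntegral.integral_of_le h01]
      refine setIntegral_congr_fun measurableSet_Ioc fun t _ => ?_
      rw [Real.rpow_two, mul_pow, Real.sq_sqrt (norm_nonneg _)]
    rw [e1, e2, e3] at hH
    have hsq : A2 ≤ Real.sqrt B * Real.sqrt g2 := by
      calc A2 ≤ B ^ ((1:ℝ)/2) * g2 ^ ((1:ℝ)/2) := hH
        _ = Real.sqrt B * Real.sqrt g2 := by
            rw [Real.sqrt_eq_rpow, Real.sqrt_eq_rpow]
    calc A2 * A2 ≤ (Real.sqrt B * Real.sqrt g2) * (Real.sqrt B * Real.sqrt g2) :=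
          mul_le_mul hsq hsq hA20 (mul_nonneg (Real.sqrt_nonneg _) (Real.sqrt_nonneg _))
      _ = (Real.sqrt B * Real.sqrt B) * (Real.sqrt g2 * Real.sqrt g2) := by ring
      _ = B * g2 := by rw [Real.mul_self_sqrt hB0, Real.mul_self_sqrt hg20]
    -- ### structural identities
  have hEσIcc : ∀ y : ℝ, IntegrableOn
      (fun s : ℝ => Complex.exp (2 * Complex.I * μ * ((s:ℂ) - y)) * σ₂ s)
      (Icc (0:ℝ) 1) volume := fun y =>
    IntegrableOn.continuousOn_mul (Continuous.continuousOn (by fun_prop)) hσ₂int isCompact_Icc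
  have hPVcont : ContinuousOn (fun s : ℝ => ∫ t in (0:ℝ)..s, σ₁ t * V t) (Icc (0:ℝ) 1) := by
    have := intervalIntegral.continuousOn_primitive_interval
      (f := fun t => σ₁ t * V t) (μ := volume) (a := 0) (b := 1) ?_
    · rwa [uIcc_of_le h01] at this
    · rw [uIcc_of_le h01]
      exact (integrableOn_Icc_iff_integrableOn_Ioc).mpr (hσVint.mono_set Ioc_subset_Icc_self)
  have hQPV : ∀ y ∈ Icc (0:ℝ) 1,
      QQ σ₂ μ (fun s => ∫ t in (0:ℝ)..s, σ₁ t * V t) y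
        = (∫ t in (0:ℝ)..y, σ₁ t * V t) * QQ σ₂ μ eFun y
          + ∫ t in y..(1:ℝ), σ₁ t * V t
              * (Complex.exp (2 * Complex.I * μ * ((t:ℂ) - y)) * QQ σ₂ μ eFun t) := by
    intro y hy
    apply QQ_primitive σ₁ σ₂ μ V hσVint
    · intro z hz
      exact (hEσIcc z).mono_set (fun w hw => ⟨le_trans hz.1 hw.1.le, hw.2⟩)
    · intro z hz
      have hprimz : ContinuousOn (fun s : ℝ => ∫ t in z..s, σ₁ t * V t) (Icc z 1) := by
        have := intervalIntegral.continuousOn_primitive_interval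
          (f := fun t => σ₁ t * V t) (μ := volume) (a := z) (b := 1) ?_
        · rwa [uIcc_of_le hz.2] at this
        · rw [uIcc_of_le hz.2]
          exact (integrableOn_Icc_iff_integrableOn_Ioc).mpr
            (hσVint.mono_set (fun w hw => ⟨le_trans hz.1 hw.1.le, hw.2⟩))
      have : IntegrableOn (fun s : ℝ => Complex.exp (2 * Complex.I * μ * ((s:ℂ) - z)) * σ₂ s
          * ∫ t in z..s, σ₁ t * V t) (Icc z 1) volume := by
        apply IntegrableOn.mul_continuousOn ?_ hprimz isCompact_Icc
        exact (hEσIcc z).mono_set (Icc_subset_Icc hz.1 le_rfl)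
      exact (this.mono_set (by rw [uIcc_of_le hz.2])).intervalIntegrable
    · exact hy
  have hRform : ∀ y ∈ Icc (0:ℝ) 1, QQ σ₂ μ eFun y - V y
      = QQ σ₂ μ (fun s => ∫ t in (0:ℝ)..s, σ₁ t * V t) y := by
    intro y hy
    rw [hV y hy]
    have hIIa : IntervalIntegrable
        (fun s : ℝ => Complex.exp (2 * Complex.I * μ * ((s:ℂ) - y)) * σ₂ s * eFun s)
        volume y 1 := by
      have : IntegrableOn
          (fun s : ℝ => Complex.exp (2 * Complex.I * μ * ((s:ℂ) - y)) * σ₂ s * eFun s)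
          (Icc (0:ℝ) 1) volume :=
        (hEσIcc y).congr_fun (fun s _ => by simp [eFun]) measurableSet_Icc
      exact (this.mono_set (uIcc_subset_Icc hy hm1)).intervalIntegrable
    have hIIb : IntervalIntegrable
        (fun s : ℝ => Complex.exp (2 * Complex.I * μ * ((s:ℂ) - y)) * σ₂ s
          * ∫ t in (0:ℝ)..s, σ₁ t * V t) volume y 1 := by
      have : IntegrableOn (fun s : ℝ => Complex.exp (2 * Complex.I * μ * ((s:ℂ) - y)) * σ₂ s
          * ∫ t in (0:ℝ)..s, σ₁ t * V t) (Icc (0:ℝ) 1) volume :=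
        (hEσIcc y).mul_continuousOn hPVcont isCompact_Icc
      exact (this.mono_set (uIcc_subset_Icc hy hm1)).intervalIntegrable
    have h1 : QQ σ₂ μ u y
        = ∫ s in y..(1:ℝ), (Complex.exp (2 * Complex.I * μ * ((s:ℂ) - y)) * σ₂ s * eFun s
            - Complex.exp (2 * Complex.I * μ * ((s:ℂ) - y)) * σ₂ s
              * ∫ t in (0:ℝ)..s, σ₁ t * V t) := by
      unfold QQ
      refine intervalIntegral.integral_congr fun s hs => ?_
      rw [uIcc_of_le hy.2] at hs
      have hsm : s ∈ Icc (0:ℝ) 1 := ⟨le_trans hy.1 hs.1, hs.2⟩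
      rw [hu s hsm]
      simp only [eFun]
      ring
    rw [h1, intervalIntegral.integral_sub hIIa hIIb]
    unfold QQ
    ring
  -- ### norm estimates
  have hPVle : ∀ y ∈ Icc (0:ℝ) 1, ‖∫ t in (0:ℝ)..y, σ₁ t * V t‖ ≤ U := by
    intro y hy
    calc ‖∫ t in (0:ℝ)..y, σ₁ t * V t‖ ≤ ∫ t in (0:ℝ)..y, ‖σ₁ t * V t‖ :=
          intervalIntegral.norm_integral_le_integral_norm hy.1
      _ = ∫ t in (0:ℝ)..y, ‖σ₁ t‖ * ‖V t‖ :=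
          intervalIntegral.integral_congr fun t _ => norm_mul _ _
      _ ≤ U := by
          rw [hU]
          apply intervalIntegral.integral_mono_interval le_rfl hy.1 hy.2
            (Filter.Eventually.of_forall fun t => mul_nonneg (norm_nonneg _) (norm_nonneg _))
            (hmkR _ hVcont.norm hm0 hm1)
  have hRbound : ∀ y ∈ Icc (0:ℝ) 1,
      ‖QQ σ₂ μ eFun y - V y‖ ≤ gamma02 σ₂ μ y * U + ce * T := by
    intro y hy
    rw [hRform y hy, hQPV y hy]
    have ht1 : ‖(∫ t in (0:ℝ)..y, σ₁ t * V t) * QQ σ₂ μ eFun y‖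
        ≤ gamma02 σ₂ μ y * U := by
      rw [norm_mul, norm_QQ_eFun, mul_comm]
      exact mul_le_mul_of_nonneg_left (hPVle y hy) (hgQ0 y)
    have ht2 : ‖∫ t in y..(1:ℝ), σ₁ t * V t
        * (Complex.exp (2 * Complex.I * μ * ((t:ℂ) - y)) * QQ σ₂ μ eFun t)‖ ≤ ce * T := by
      have hIIc : IntervalIntegrable (fun t : ℝ => σ₁ t * V t
          * (Complex.exp (2 * Complex.I * μ * ((t:ℂ) - y)) * QQ σ₂ μ eFun t)) volume y 1 := by
        have : IntegrableOn (fun t : ℝ => σ₁ t * V t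
            * (Complex.exp (2 * Complex.I * μ * ((t:ℂ) - y)) * QQ σ₂ μ eFun t))
            (Icc (0:ℝ) 1) volume := by
          apply IntegrableOn.mul_continuousOn hσVint ?_ isCompact_Icc
          exact (Continuous.continuousOn (by fun_prop)).mul hQecont
        exact (this.mono_set (uIcc_subset_Icc hy hm1)).intervalIntegrable
      calc ‖∫ t in y..(1:ℝ), σ₁ t * V t
            * (Complex.exp (2 * Complex.I * μ * ((t:ℂ) - y)) * QQ σ₂ μ eFun t)‖
          ≤ ∫ t in y..(1:ℝ), ‖σ₁ t * V t
            * (Complex.exp (2 * Complex.I * μ * ((t:ℂ) - y)) * QQ σ₂ μ eFun t)‖ :=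
            intervalIntegral.norm_integral_le_integral_norm hy.2
        _ ≤ ∫ t in y..(1:ℝ), ce * (‖σ₁ t‖ * (gamma02 σ₂ μ t * ‖V t‖)) := by
            apply intervalIntegral.integral_mono_on hy.2 hIIc.norm
              ((hmkR _ (hgQc.mul hVcont.norm) hy hm1).const_mul ce)
            intro t ht
            have htm : t ∈ Icc (0:ℝ) 1 := ⟨le_trans hy.1 ht.1, ht.2⟩
            rw [norm_mul, norm_mul, norm_mul, norm_QQ_eFun]
            have h1 : ‖Complex.exp (2 * Complex.I * μ * ((t:ℂ) - y))‖ ≤ ce :=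
              hEb hy htm ht.1
            have h2 : (0:ℝ) ≤ ‖σ₁ t‖ * ‖V t‖ := mul_nonneg (norm_nonneg _) (norm_nonneg _)
            calc ‖σ₁ t‖ * ‖V t‖ * (‖Complex.exp (2 * Complex.I * μ * ((t:ℂ) - y))‖
                  * gamma02 σ₂ μ t)
                ≤ ‖σ₁ t‖ * ‖V t‖ * (ce * gamma02 σ₂ μ t) := by
                  apply mul_le_mul_of_nonneg_left ?_ h2
                  exact mul_le_mul_of_nonneg_right h1 (hgQ0 t)
              _ = ce * (‖σ₁ t‖ * (gamma02 σ₂ μ t * ‖V t‖)) := by ring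
        _ ≤ ce * T := by
            rw [intervalIntegral.integral_const_mul]
            apply mul_le_mul_of_nonneg_left ?_ hce0
            rw [hT]
            apply intervalIntegral.integral_mono_interval hy.1 hy.2 le_rfl
              (Filter.Eventually.of_forall fun t =>
                mul_nonneg (norm_nonneg _) (mul_nonneg (hgQ0 t) (norm_nonneg _)))
              (hmkR _ (hgQc.mul hVcont.norm) hm0 hm1)
    calc ‖(∫ t in (0:ℝ)..y, σ₁ t * V t) * QQ σ₂ μ eFun y
          + ∫ t in y..(1:ℝ), σ₁ t * V t
            * (Complex.exp (2 * Complex.I * μ * ((t:ℂ) - y)) * QQ σ₂ μ eFun t)‖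
        ≤ ‖(∫ t in (0:ℝ)..y, σ₁ t * V t) * QQ σ₂ μ eFun y‖
          + ‖∫ t in y..(1:ℝ), σ₁ t * V t
            * (Complex.exp (2 * Complex.I * μ * ((t:ℂ) - y)) * QQ σ₂ μ eFun t)‖ :=
          norm_add_le _ _
      _ ≤ gamma02 σ₂ μ y * U + ce * T := add_le_add ht1 ht2
  have hVb : ∀ y ∈ Icc (0:ℝ) 1, ‖V y‖ ≤ gamma02 σ₂ μ y * (1 + U) + ce * T := by
    intro y hy
    have h1 : ‖V y‖ ≤ ‖QQ σ₂ μ eFun y‖ + ‖QQ σ₂ μ eFun y - V y‖ := by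
      calc ‖V y‖ = ‖QQ σ₂ μ eFun y - (QQ σ₂ μ eFun y - V y)‖ := by congr 1; ring
        _ ≤ ‖QQ σ₂ μ eFun y‖ + ‖QQ σ₂ μ eFun y - V y‖ := norm_sub_le _ _
    rw [norm_QQ_eFun] at h1
    have h2 := hRbound y hy
    nlinarith [hgQ0 y]
  have hMVceS : MV ≤ ce * (S * Mu) := by
    apply hMVLe
    intro y hy
    rw [hV y hy]
    have hIIc : IntervalIntegrable (fun s : ℝ =>
        Complex.exp (2 * Complex.I * μ * ((s:ℂ) - y)) * σ₂ s * u s) volume y 1 := by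
      have : IntegrableOn (fun s : ℝ =>
          Complex.exp (2 * Complex.I * μ * ((s:ℂ) - y)) * σ₂ s * u s) (Icc (0:ℝ) 1) volume :=
        (hEσIcc y).mul_continuousOn hucont isCompact_Icc
      exact (this.mono_set (uIcc_subset_Icc hy hm1)).intervalIntegrable
    calc ‖QQ σ₂ μ u y‖
        ≤ ∫ s in y..(1:ℝ), ‖Complex.exp (2 * Complex.I * μ * ((s:ℂ) - y)) * σ₂ s * u s‖ :=
          intervalIntegral.norm_integral_le_integral_norm hy.2
      _ ≤ ∫ s in y..(1:ℝ), ce * (‖σ₂ s‖ * Mu) := by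
          apply intervalIntegral.integral_mono_on hy.2 hIIc.norm
            (((hIIn2 hy hm1).mul_const Mu).const_mul ce)
          intro s hs
          have hsm : s ∈ Icc (0:ℝ) 1 := ⟨le_trans hy.1 hs.1, hs.2⟩
          rw [norm_mul, norm_mul]
          calc ‖Complex.exp (2 * Complex.I * μ * ((s:ℂ) - y))‖ * ‖σ₂ s‖ * ‖u s‖
              ≤ ce * ‖σ₂ s‖ * Mu := by
                apply mul_le_mul ?_ (hMuB s hsm) (norm_nonneg _)
                  (mul_nonneg hce0 (norm_nonneg _))
                exact mul_le_mul_of_nonneg_right (hEb hy hsm hs.1) (norm_nonneg _)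
            _ = ce * (‖σ₂ s‖ * Mu) := by ring
      _ ≤ ce * (S * Mu) := by
          rw [intervalIntegral.integral_const_mul, intervalIntegral.integral_mul_const]
          apply mul_le_mul_of_nonneg_left ?_ hce0
          apply mul_le_mul_of_nonneg_right ?_ hMu0
          apply intervalIntegral.integral_mono_interval hy.1 hy.2 le_rfl
            (Filter.Eventually.of_forall fun t => norm_nonneg _) (hIIn2 hm0 hm1)
  have hUBV : U ≤ B * MV := by
    rw [hU, hB]
    have := intervalIntegral.integral_mono_on h01 (hmkR _ hVcont.norm hm0 hm1)
      ((hσ₁n.mono_set (uIcc_subset_Icc hm0 hm1)).intervalIntegrable.mul_const MV)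
      (fun t ht => mul_le_mul_of_nonneg_left (hMVB t ht) (norm_nonneg (σ₁ t)))
    rwa [intervalIntegral.integral_mul_const] at this
  have hTA2MV : T ≤ A2 * MV := by
    rw [hT, hA2]
    have := intervalIntegral.integral_mono_on h01 (hmkR _ (hgQc.mul hVcont.norm) hm0 hm1)
      ((hmkR _ hgQc hm0 hm1).mul_const MV)
      (fun t ht => ?_)
    · rwa [intervalIntegral.integral_mul_const] at this
    · have h1 := hMVB t ht
      have h2 : (0:ℝ) ≤ ‖σ₁ t‖ * gamma02 σ₂ μ t := mul_nonneg (norm_nonneg _) (hgQ0 t)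
      calc ‖σ₁ t‖ * (gamma02 σ₂ μ t * ‖V t‖) = ‖σ₁ t‖ * gamma02 σ₂ μ t * ‖V t‖ := by ring
        _ ≤ ‖σ₁ t‖ * gamma02 σ₂ μ t * MV := mul_le_mul_of_nonneg_left h1 h2
  have hIR : (∫ t in (0:ℝ)..1, ‖σ₁ t‖ * ‖QQ σ₂ μ eFun t - V t‖) ≤ A2 * U + ce * (B * T) := by
    have hstep : (∫ t in (0:ℝ)..1, ‖σ₁ t‖ * ‖QQ σ₂ μ eFun t - V t‖)
        ≤ ∫ t in (0:ℝ)..1, (‖σ₁ t‖ * gamma02 σ₂ μ t * U + ‖σ₁ t‖ * (ce * T)) := by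
      apply intervalIntegral.integral_mono_on h01 (hmkR _ hQeVcont.norm hm0 hm1)
      · apply IntervalIntegrable.add
        · exact (hmkR _ hgQc hm0 hm1).mul_const U
        · exact ((hσ₁n.mono_set (uIcc_subset_Icc hm0 hm1)).intervalIntegrable).mul_const (ce * T)
      · intro t ht
        have h1 := hRbound t ht
        calc ‖σ₁ t‖ * ‖QQ σ₂ μ eFun t - V t‖
            ≤ ‖σ₁ t‖ * (gamma02 σ₂ μ t * U + ce * T) :=
              mul_le_mul_of_nonneg_left h1 (norm_nonneg _)
          _ = ‖σ₁ t‖ * gamma02 σ₂ μ t * U + ‖σ₁ t‖ * (ce * T) := by ring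
    rw [intervalIntegral.integral_add ((hmkR _ hgQc hm0 hm1).mul_const U)
      (((hσ₁n.mono_set (uIcc_subset_Icc hm0 hm1)).intervalIntegrable).mul_const (ce * T)),
      intervalIntegral.integral_mul_const, intervalIntegral.integral_mul_const] at hstep
    rw [hA2, hB]
    calc (∫ t in (0:ℝ)..1, ‖σ₁ t‖ * ‖QQ σ₂ μ eFun t - V t‖)
        ≤ (∫ t in (0:ℝ)..1, ‖σ₁ t‖ * gamma02 σ₂ μ t) * U
          + (∫ t in (0:ℝ)..1, ‖σ₁ t‖) * (ce * T) := hstep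
      _ = (∫ t in (0:ℝ)..1, ‖σ₁ t‖ * gamma02 σ₂ μ t) * U
          + ce * ((∫ t in (0:ℝ)..1, ‖σ₁ t‖) * T) := by ring
  have hDid : ∀ y ∈ Icc (0:ℝ) 1, u y - 1 + K1 σ₁ σ₂ μ eFun y
      = ∫ t in (0:ℝ)..y, σ₁ t * (QQ σ₂ μ eFun t - V t) := by
    intro y hy
    calc u y - 1 + K1 σ₁ σ₂ μ eFun y
        = (∫ t in (0:ℝ)..y, σ₁ t * QQ σ₂ μ eFun t) - ∫ t in (0:ℝ)..y, σ₁ t * V t := by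
          rw [hu y hy, K1_eq σ₁ σ₂ μ eFun y]
          ring
      _ = ∫ t in (0:ℝ)..y, (σ₁ t * QQ σ₂ μ eFun t - σ₁ t * V t) :=
          (intervalIntegral.integral_sub (hIIσQe hm0 hy) (hIIσV hm0 hy)).symm
      _ = ∫ t in (0:ℝ)..y, σ₁ t * (QQ σ₂ μ eFun t - V t) :=
          intervalIntegral.integral_congr fun t _ => by ring
  have hDpt : ∀ y ∈ Icc (0:ℝ) 1,
      ‖u y - 1 + K1 σ₁ σ₂ μ eFun y‖ ≤ A2 * U + ce * (B * T) := by
    intro y hy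
    rw [hDid y hy]
    calc ‖∫ t in (0:ℝ)..y, σ₁ t * (QQ σ₂ μ eFun t - V t)‖
        ≤ ∫ t in (0:ℝ)..y, ‖σ₁ t * (QQ σ₂ μ eFun t - V t)‖ :=
          intervalIntegral.norm_integral_le_integral_norm hy.1
      _ = ∫ t in (0:ℝ)..y, ‖σ₁ t‖ * ‖QQ σ₂ μ eFun t - V t‖ :=
          intervalIntegral.integral_congr fun t _ => norm_mul _ _
      _ ≤ ∫ t in (0:ℝ)..1, ‖σ₁ t‖ * ‖QQ σ₂ μ eFun t - V t‖ :=
          intervalIntegral.integral_mono_interval le_rfl hy.1 hy.2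
            (Filter.Eventually.of_forall fun t =>
              mul_nonneg (norm_nonneg _) (norm_nonneg _))
            (hmkR _ hQeVcont.norm hm0 hm1)
      _ ≤ A2 * U + ce * (B * T) := hIR
    -- ### contraction and conclusion
  have hKA2 : ∀ y ∈ Icc (0:ℝ) 1, ‖K1 σ₁ σ₂ μ eFun y‖ ≤ A2 := by
    intro y hy
    rw [K1_eq σ₁ σ₂ μ eFun y]
    calc ‖∫ t in (0:ℝ)..y, σ₁ t * QQ σ₂ μ eFun t‖
        ≤ ∫ t in (0:ℝ)..y, ‖σ₁ t * QQ σ₂ μ eFun t‖ :=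
          intervalIntegral.norm_integral_le_integral_norm hy.1
      _ = ∫ t in (0:ℝ)..y, ‖σ₁ t‖ * gamma02 σ₂ μ t :=
          intervalIntegral.integral_congr fun t _ => by rw [norm_mul, norm_QQ_eFun]
      _ ≤ A2 := by
          rw [hA2]
          apply intervalIntegral.integral_mono_interval le_rfl hy.1 hy.2
            (Filter.Eventually.of_forall fun t => mul_nonneg (norm_nonneg _) (hgQ0 t))
            (hmkR _ hgQc hm0 hm1)
  have hMu1 : Mu ≤ 1 + A2 + (A2 * U + ce * (B * T)) := by
    apply hMuLe
    intro y hy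
    have h1 : u y = (u y - 1 + K1 σ₁ σ₂ μ eFun y) + (1 - K1 σ₁ σ₂ μ eFun y) := by ring
    calc ‖u y‖ = ‖(u y - 1 + K1 σ₁ σ₂ μ eFun y) + (1 - K1 σ₁ σ₂ μ eFun y)‖ := by rw [← h1]
      _ ≤ ‖u y - 1 + K1 σ₁ σ₂ μ eFun y‖ + ‖(1:ℂ) - K1 σ₁ σ₂ μ eFun y‖ := norm_add_le _ _
      _ ≤ (A2 * U + ce * (B * T)) + (‖(1:ℂ)‖ + ‖K1 σ₁ σ₂ μ eFun y‖) :=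
          add_le_add (hDpt y hy) (norm_sub_le _ _)
      _ ≤ (A2 * U + ce * (B * T)) + (1 + A2) := by
          have := hKA2 y hy
          simp only [norm_one]
          linarith
      _ = 1 + A2 + (A2 * U + ce * (B * T)) := by ring
  have hkk : (1 + ce) * (A2 * B) * (ce * S) ≤ 1/2 := by
    have t1 : A2 * B ≤ (sN * γ2) * sN :=
      mul_le_mul hA2γ hBsN hB0 (mul_nonneg hsN0 hγ20)
    have t2 : ce * S ≤ ce * sN := mul_le_mul_of_nonneg_left hSsN hce0
    have t3 : (1 + ce) * (A2 * B) ≤ (2 * ce) * ((sN * γ2) * sN) :=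
      mul_le_mul (by linarith) t1 (mul_nonneg hA20 hB0) (by linarith)
    have t4 : (1 + ce) * (A2 * B) * (ce * S) ≤ (2 * ce) * ((sN * γ2) * sN) * (ce * sN) :=
      mul_le_mul t3 t2 (mul_nonneg hce0 hS0)
        (mul_nonneg (by linarith) (mul_nonneg (mul_nonneg hsN0 hγ20) hsN0))
    have he : ce * ce = Real.exp (4 * r) := by
      rw [hce, ← Real.exp_add]
      congr 1
      ring
    have t5 : (2 * ce) * ((sN * γ2) * sN) * (ce * sN) = 2 * Real.exp (4*r) * sN^3 * γ2 := by
      rw [← he]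
      ring
    have t6 : 2 * Real.exp (4*r) * sN^3 * γ2 ≤ 1/2 := by
      by_cases hz : sN = 0
      · rw [hz]
        norm_num
      · have hpos : 0 < sN := lt_of_le_of_ne hsN0 (Ne.symm hz)
        have ha : (0:ℝ) < 2 * Real.exp (4*r) * sN^3 := by positivity
        calc 2 * Real.exp (4*r) * sN^3 * γ2
            ≤ 2 * Real.exp (4*r) * sN^3 * (1 / (2 * (2 * Real.exp (4*r) * sN^3))) :=
              mul_le_mul_of_nonneg_left hγ2 (by positivity)
          _ = 1/2 := by
              field_simp
    linarith [t4, t5.symm ▸ t6]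
  have hMu2 : Mu ≤ 2 * (1 + A2) := by
    have h1 : A2 * U ≤ A2 * (B * MV) := mul_le_mul_of_nonneg_left hUBV hA20
    have h2 : ce * (B * T) ≤ ce * (B * (A2 * MV)) :=
      mul_le_mul_of_nonneg_left (mul_le_mul_of_nonneg_left hTA2MV hB0) hce0
    have h3 : A2 * (B * MV) + ce * (B * (A2 * MV)) = ((1 + ce) * (A2 * B)) * MV := by ring
    have h4 : ((1 + ce) * (A2 * B)) * MV ≤ ((1 + ce) * (A2 * B)) * (ce * (S * Mu)) :=
      mul_le_mul_of_nonneg_left hMVceS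
        (mul_nonneg (by linarith) (mul_nonneg hA20 hB0))
    have h5 : ((1 + ce) * (A2 * B)) * (ce * (S * Mu)) = ((1 + ce) * (A2 * B) * (ce * S)) * Mu := by
      ring
    have h6 : ((1 + ce) * (A2 * B) * (ce * S)) * Mu ≤ (1/2) * Mu :=
      mul_le_mul_of_nonneg_right hkk hMu0
    linarith [hMu1]
  have hA2n : A2 ≤ B * (ce * S) := by
    rw [hA2, hB]
    have := intervalIntegral.integral_mono_on h01 (hmkR _ hgQc hm0 hm1)
      (((hσ₁n.mono_set (uIcc_subset_Icc hm0 hm1)).intervalIntegrable).mul_const (ce * S))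
      (fun t ht => mul_le_mul_of_nonneg_left (hgQb t ht) (norm_nonneg (σ₁ t)))
    rwa [intervalIntegral.integral_mul_const] at this
  have hA2sn : A2 ≤ ce * sN^2 := by
    calc A2 ≤ B * (ce * S) := hA2n
      _ ≤ sN * (ce * sN) :=
          mul_le_mul hBsN (mul_le_mul_of_nonneg_left hSsN hce0) (mul_nonneg hce0 hS0) hsN0
      _ = ce * sN^2 := by ring
  have hMVn : MV ≤ ce * (sN * (2 * (1 + ce * sN^2))) := by
    calc MV ≤ ce * (S * Mu) := hMVceS
      _ ≤ ce * (sN * (2 * (1 + ce * sN^2))) := by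
          apply mul_le_mul_of_nonneg_left ?_ hce0
          apply mul_le_mul hSsN ?_ hMu0 hsN0
          calc Mu ≤ 2 * (1 + A2) := hMu2
            _ ≤ 2 * (1 + ce * sN^2) := by linarith [hA2sn]
  set cU := 1 + B * MV + ce * (B * MV) with hcU
  have hBMV0 : 0 ≤ B * MV := mul_nonneg hB0 hMV0
  have hcU0 : 0 ≤ cU := by
    rw [hcU]
    have := mul_nonneg hce0 hBMV0
    linarith
  have hVpt : ∀ t ∈ Icc (0:ℝ) 1,
      ‖V t‖ ≤ gamma02 σ₂ μ t * (1 + U) + ce * (A2 * MV) := by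
    intro t ht
    have h1 := hVb t ht
    have h2 : ce * T ≤ ce * (A2 * MV) := mul_le_mul_of_nonneg_left hTA2MV hce0
    linarith
  have hUbnd : U ≤ A2 * cU := by
    have hstep : U ≤ ∫ t in (0:ℝ)..1,
        (‖σ₁ t‖ * gamma02 σ₂ μ t * (1 + U) + ‖σ₁ t‖ * (ce * (A2 * MV))) := by
      rw [hU]
      apply intervalIntegral.integral_mono_on h01 (hmkR _ hVcont.norm hm0 hm1)
      · apply IntervalIntegrable.add
        · exact (hmkR _ hgQc hm0 hm1).mul_const (1 + U)
        · exact ((hσ₁n.mono_set (uIcc_subset_Icc hm0 hm1)).intervalIntegrable).mul_const _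
      · intro t ht
        calc ‖σ₁ t‖ * ‖V t‖
            ≤ ‖σ₁ t‖ * (gamma02 σ₂ μ t * (1 + U) + ce * (A2 * MV)) :=
              mul_le_mul_of_nonneg_left (hVpt t ht) (norm_nonneg _)
          _ = ‖σ₁ t‖ * gamma02 σ₂ μ t * (1 + U) + ‖σ₁ t‖ * (ce * (A2 * MV)) := by ring
    rw [intervalIntegral.integral_add ((hmkR _ hgQc hm0 hm1).mul_const (1 + U))
      (((hσ₁n.mono_set (uIcc_subset_Icc hm0 hm1)).intervalIntegrable).mul_const _),
      intervalIntegral.integral_mul_const, intervalIntegral.integral_mul_const] at hstep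
    rw [← hA2, ← hB] at hstep
    -- hstep : U ≤ A2 * (1 + U) + B * (ce * (A2 * MV))
    have h1 : A2 * U ≤ A2 * (B * MV) := mul_le_mul_of_nonneg_left hUBV hA20
    have e1 : A2 * (1 + U) + B * (ce * (A2 * MV)) = A2 + A2 * U + ce * (A2 * (B * MV)) := by
      ring
    have e2 : A2 * cU = A2 + A2 * (B * MV) + ce * (A2 * (B * MV)) := by rw [hcU]; ring
    have h2 : ce * (A2 * U) ≤ ce * (A2 * (B * MV)) := mul_le_mul_of_nonneg_left h1 hce0
    linarith
  have hTbnd : T ≤ g2 * cU := by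
    have hstep : T ≤ ∫ t in (0:ℝ)..1,
        (‖σ₁ t‖ * gamma02 σ₂ μ t ^ 2 * (1 + U) + ‖σ₁ t‖ * gamma02 σ₂ μ t * (ce * (A2 * MV))) := by
      rw [hT]
      apply intervalIntegral.integral_mono_on h01 (hmkR _ (hgQc.mul hVcont.norm) hm0 hm1)
      · apply IntervalIntegrable.add
        · exact (hmkR _ (hgQc.pow 2) hm0 hm1).mul_const (1 + U)
        · exact (hmkR _ hgQc hm0 hm1).mul_const _
      · intro t ht
        have h0 : (0:ℝ) ≤ ‖σ₁ t‖ * gamma02 σ₂ μ t := mul_nonneg (norm_nonneg _) (hgQ0 t)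
        calc ‖σ₁ t‖ * (gamma02 σ₂ μ t * ‖V t‖)
            = (‖σ₁ t‖ * gamma02 σ₂ μ t) * ‖V t‖ := by ring
          _ ≤ (‖σ₁ t‖ * gamma02 σ₂ μ t) * (gamma02 σ₂ μ t * (1 + U) + ce * (A2 * MV)) :=
              mul_le_mul_of_nonneg_left (hVpt t ht) h0
          _ = ‖σ₁ t‖ * gamma02 σ₂ μ t ^ 2 * (1 + U)
              + ‖σ₁ t‖ * gamma02 σ₂ μ t * (ce * (A2 * MV)) := by ring
    rw [intervalIntegral.integral_add ((hmkR (fun t => gamma02 σ₂ μ t ^ 2) (hgQc.pow 2) hm0 hm1).mul_const (1 + U))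
      ((hmkR _ hgQc hm0 hm1).mul_const _),
      intervalIntegral.integral_mul_const, intervalIntegral.integral_mul_const] at hstep
    rw [← hg2, ← hA2] at hstep
    -- hstep : T ≤ g2 * (1 + U) + A2 * (ce * (A2 * MV))
    have h1 : g2 * (1 + U) ≤ g2 * (1 + B * MV) :=
      mul_le_mul_of_nonneg_left (by linarith [hUBV]) hg20
    have h2 : A2 * (ce * (A2 * MV)) = (ce * MV) * (A2 * A2) := by ring
    have h3 : (ce * MV) * (A2 * A2) ≤ (ce * MV) * (B * g2) :=
      mul_le_mul_of_nonneg_left hCS (mul_nonneg hce0 hMV0)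
    have e : g2 * (1 + B * MV) + (ce * MV) * (B * g2) = g2 * cU := by rw [hcU]; ring
    linarith
  -- final assembly
  intro y hy
  have hgT0 : 0 ≤ gammaT σ₁ σ₂ μ := gammaT_nonneg σ₁ σ₂ μ
  have hg2γ : g2 ≤ gammaT σ₁ σ₂ μ := by
    unfold gammaT
    have h1 : (0:ℝ) ≤ ∫ s in (0:ℝ)..1, ‖σ₂ s‖ * gamma01 σ₁ μ s ^ 2 := by
      apply intervalIntegral.integral_nonneg h01
      intro t _
      unfold gamma01
      positivity
    rw [hg2]
    linarith
  have hq0 : (0:ℝ) ≤ 2 * (1 + ce * sN^2) := by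
    have := mul_nonneg hce0 (sq_nonneg sN)
    linarith
  have hMVb0 : (0:ℝ) ≤ ce * (sN * (2 * (1 + ce * sN^2))) :=
    mul_nonneg hce0 (mul_nonneg hsN0 hq0)
  have hcUb0 : (0:ℝ) ≤ 1 + sN * (ce * (sN * (2 * (1 + ce * sN^2))))
      + ce * (sN * (ce * (sN * (2 * (1 + ce * sN^2))))) := by
    have h1 : (0:ℝ) ≤ sN * (ce * (sN * (2 * (1 + ce * sN^2)))) := mul_nonneg hsN0 hMVb0
    have h2 : (0:ℝ) ≤ ce * (sN * (ce * (sN * (2 * (1 + ce * sN^2))))) :=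
      mul_nonneg hce0 h1
    linarith
  have hcUcUb : cU ≤ 1 + sN * (ce * (sN * (2 * (1 + ce * sN^2))))
      + ce * (sN * (ce * (sN * (2 * (1 + ce * sN^2))))) := by
    rw [hcU]
    have h1 : B * MV ≤ sN * (ce * (sN * (2 * (1 + ce * sN^2)))) :=
      mul_le_mul hBsN hMVn hMV0 hsN0
    have h2 : ce * (B * MV) ≤ ce * (sN * (ce * (sN * (2 * (1 + ce * sN^2))))) :=
      mul_le_mul_of_nonneg_left h1 hce0
    linarith
  calc ‖u y - 1 + K1 σ₁ σ₂ μ eFun y‖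
      ≤ A2 * U + ce * (B * T) := hDpt y hy
    _ ≤ (A2 * A2) * cU + ce * (B * (g2 * cU)) := by
        have h1 : A2 * U ≤ A2 * (A2 * cU) := mul_le_mul_of_nonneg_left hUbnd hA20
        have h2 : ce * (B * T) ≤ ce * (B * (g2 * cU)) :=
          mul_le_mul_of_nonneg_left (mul_le_mul_of_nonneg_left hTbnd hB0) hce0
        have e : A2 * (A2 * cU) = (A2 * A2) * cU := by ring
        linarith
    _ ≤ (B * g2) * cU + ce * (B * (g2 * cU)) := by
        have := mul_le_mul_of_nonneg_right hCS hcU0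
        linarith
    _ ≤ (sN * gammaT σ₁ σ₂ μ) * (1 + sN * (ce * (sN * (2 * (1 + ce * sN^2))))
          + ce * (sN * (ce * (sN * (2 * (1 + ce * sN^2))))))
        + ce * (sN * (gammaT σ₁ σ₂ μ * (1 + sN * (ce * (sN * (2 * (1 + ce * sN^2))))
          + ce * (sN * (ce * (sN * (2 * (1 + ce * sN^2)))))))) := by
        have hBg : B * g2 ≤ sN * gammaT σ₁ σ₂ μ := mul_le_mul hBsN hg2γ hg20 hsN0
        have h1 : (B * g2) * cU ≤ (sN * gammaT σ₁ σ₂ μ) * (1 + sN * (ce * (sN * (2 * (1 + ce * sN^2))))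
            + ce * (sN * (ce * (sN * (2 * (1 + ce * sN^2)))))) :=
          mul_le_mul hBg hcUcUb hcU0 (mul_nonneg hsN0 hgT0)
        have h2' : g2 * cU ≤ gammaT σ₁ σ₂ μ * (1 + sN * (ce * (sN * (2 * (1 + ce * sN^2))))
            + ce * (sN * (ce * (sN * (2 * (1 + ce * sN^2)))))) :=
          mul_le_mul hg2γ hcUcUb hcU0 hgT0
        have h2 : ce * (B * (g2 * cU)) ≤ ce * (sN * (gammaT σ₁ σ₂ μ * (1 + sN * (ce * (sN * (2 * (1 + ce * sN^2))))
            + ce * (sN * (ce * (sN * (2 * (1 + ce * sN^2)))))))) := by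
          apply mul_le_mul_of_nonneg_left ?_ hce0
          exact mul_le_mul hBsN h2' (mul_nonneg hg20 hcU0) hsN0
        linarith
    _ = Cone σ₁ σ₂ p r * gammaT σ₁ σ₂ μ := by
        unfold Cone
        rw [← hce, ← hsN]
        ring

lemma QQ_eFun_continuousOn (σ₂ : ℝ → ℂ) (μ : ℂ)
    (hσ₂int : IntegrableOn σ₂ (Icc (0:ℝ) 1) volume) :
    ContinuousOn (QQ σ₂ μ eFun) (Icc (0:ℝ) 1) := by
  have h01 : (0:ℝ) ≤ 1 := zero_le_one
  have hm0 : (0:ℝ) ∈ Icc (0:ℝ) 1 := ⟨le_rfl, h01⟩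
  have hm1 : (1:ℝ) ∈ Icc (0:ℝ) 1 := ⟨h01, le_rfl⟩
  have hexpσ : IntegrableOn (fun s : ℝ => Complex.exp (2 * Complex.I * μ * s) * σ₂ s)
      (Icc (0:ℝ) 1) volume := by
    apply IntegrableOn.continuousOn_mul ?_ hσ₂int isCompact_Icc
    exact Continuous.continuousOn (by fun_prop)
  have hIIexpσ : ∀ {a b : ℝ}, a ∈ Icc (0:ℝ) 1 → b ∈ Icc (0:ℝ) 1 →
      IntervalIntegrable (fun s : ℝ => Complex.exp (2 * Complex.I * μ * s) * σ₂ s)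
        volume a b := fun ha hb =>
    (hexpσ.mono_set (uIcc_subset_Icc ha hb)).intervalIntegrable
  have hprim : ContinuousOn (fun y : ℝ => ∫ s in (0:ℝ)..y,
      Complex.exp (2 * Complex.I * μ * s) * σ₂ s) (Icc (0:ℝ) 1) := by
    have := intervalIntegral.continuousOn_primitive_interval
      (f := fun s : ℝ => Complex.exp (2 * Complex.I * μ * s) * σ₂ s) (μ := volume)
      (a := 0) (b := 1) ?_
    · rwa [uIcc_of_le h01] at this
    · rw [uIcc_of_le h01]
      exact (integrableOn_Icc_iff_integrableOn_Ioc).mpr (hexpσ.mono_set Ioc_subset_Icc_self)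
  have hc : ContinuousOn (fun y : ℝ => Complex.exp (-(2 * Complex.I * μ * y))
      * ((∫ s in (0:ℝ)..1, Complex.exp (2 * Complex.I * μ * s) * σ₂ s)
        - ∫ s in (0:ℝ)..y, Complex.exp (2 * Complex.I * μ * s) * σ₂ s)) (Icc (0:ℝ) 1) := by
    apply ContinuousOn.mul
    · exact Continuous.continuousOn (by fun_prop)
    · exact continuousOn_const.sub hprim
  refine ContinuousOn.congr hc (fun y hy => ?_)
  rw [QQ_eFun_eq]
  congr 1
  exact (intervalIntegral.integral_interval_sub_left (hIIexpσ hm0 hm1) (hIIexpσ hm0 hy)).symm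

lemma K1_eFun_continuousOn (σ₁ σ₂ : ℝ → ℂ) (μ : ℂ)
    (hσ₁int : IntegrableOn σ₁ (Icc (0:ℝ) 1) volume)
    (hσ₂int : IntegrableOn σ₂ (Icc (0:ℝ) 1) volume) :
    ContinuousOn (K1 σ₁ σ₂ μ eFun) (Icc (0:ℝ) 1) := by
  have h01 : (0:ℝ) ≤ 1 := zero_le_one
  have hσQeint : IntegrableOn (fun t => σ₁ t * QQ σ₂ μ eFun t) (Icc (0:ℝ) 1) volume :=
    hσ₁int.mul_continuousOn (QQ_eFun_continuousOn σ₂ μ hσ₂int) isCompact_Icc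
  have hprim : ContinuousOn (fun y : ℝ => ∫ t in (0:ℝ)..y, σ₁ t * QQ σ₂ μ eFun t)
      (Icc (0:ℝ) 1) := by
    have := intervalIntegral.continuousOn_primitive_interval
      (f := fun t => σ₁ t * QQ σ₂ μ eFun t) (μ := volume) (a := 0) (b := 1) ?_
    · rwa [uIcc_of_le h01] at this
    · rw [uIcc_of_le h01]
      exact (integrableOn_Icc_iff_integrableOn_Ioc).mpr (hσQeint.mono_set Ioc_subset_Icc_self)
  exact ContinuousOn.congr hprim (fun y _ => K1_eq σ₁ σ₂ μ eFun y)

lemma intnorm₂_le_sigmaNorm (p : ℝ≥0∞) (hp1 : 1 ≤ p)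
    (σ₁ σ₂ : ℝ → ℂ) (hσ₁m : Measurable σ₁) (hσ₂m : Measurable σ₂)
    (hσ₁ : MemLp σ₁ p (volume.restrict (Icc (0:ℝ) 1)))
    (hσ₂ : MemLp σ₂ p (volume.restrict (Icc (0:ℝ) 1))) :
    (∫ t in (0:ℝ)..1, ‖σ₂ t‖) ≤ sigmaNorm σ₁ σ₂ p := by
  have h01 : (0:ℝ) ≤ 1 := zero_le_one
  haveI hfin : IsFiniteMeasure (volume.restrict (Icc (0:ℝ) 1)) :=
    ⟨by rw [Measure.restrict_apply_univ, Real.volume_Icc]; exact ENNReal.ofReal_lt_top⟩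
  haveI hprob : IsProbabilityMeasure (volume.restrict (Icc (0:ℝ) 1)) :=
    ⟨by rw [Measure.restrict_apply_univ, Real.volume_Icc]; norm_num⟩
  have hmaxmem : MemLp (fun t => max ‖σ₁ t‖ ‖σ₂ t‖) p (volume.restrict (Icc (0:ℝ) 1)) := by
    apply MemLp.of_le (hσ₁.norm.add hσ₂.norm)
      ((hσ₁m.norm.max hσ₂m.norm).aestronglyMeasurable)
    apply Filter.Eventually.of_forall
    intro t
    have h1 : (0:ℝ) ≤ max ‖σ₁ t‖ ‖σ₂ t‖ := le_trans (norm_nonneg _) (le_max_left _ _)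
    rw [Real.norm_of_nonneg h1]
    calc max ‖σ₁ t‖ ‖σ₂ t‖ ≤ ‖σ₁ t‖ + ‖σ₂ t‖ :=
          max_le (le_add_of_nonneg_right (norm_nonneg _)) (le_add_of_nonneg_left (norm_nonneg _))
      _ ≤ ‖‖σ₁ t‖ + ‖σ₂ t‖‖ := le_abs_self _
  have h1 : (∫ t in (0:ℝ)..1, ‖σ₂ t‖) = ∫ t in Icc (0:ℝ) 1, ‖σ₂ t‖ := by
    rw [intervalIntegral.integral_of_le h01, ← integral_Icc_eq_integral_Ioc]
  have h2 : (∫ t in Icc (0:ℝ) 1, ‖σ₂ t‖)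
      = (eLpNorm σ₂ 1 (volume.restrict (Icc (0:ℝ) 1))).toReal := by
    rw [eLpNorm_one_eq_lintegral_enorm,
      integral_eq_lintegral_of_nonneg_ae (Filter.Eventually.of_forall fun t => norm_nonneg _)
        hσ₂.1.norm]
    congr 1
    exact lintegral_congr fun t => ofReal_norm_eq_enorm (σ₂ t)
  rw [h1, h2]
  unfold sigmaNorm
  apply ENNReal.toReal_mono hmaxmem.eLpNorm_ne_top
  calc eLpNorm σ₂ 1 (volume.restrict (Icc (0:ℝ) 1))
      ≤ eLpNorm σ₂ p (volume.restrict (Icc (0:ℝ) 1)) :=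
        eLpNorm_le_eLpNorm_of_exponent_le hp1 hσ₂.1
    _ ≤ eLpNorm (fun t => max ‖σ₁ t‖ ‖σ₂ t‖) p (volume.restrict (Icc (0:ℝ) 1)) :=
        eLpNorm_mono fun t => (le_max_right _ _).trans (le_abs_self _)

/-- asymptotics of the solution `(w₁,w₂)` with `w₁(0)=1`, `w₂(1)=0`, remainder `O(γ̃)`. -/
theorem stmt7
    (p q : ℝ≥0∞) (hp1 : 1 ≤ p) (hp2 : p < 2) (hpq : 1/p + 1/q = 1)
    (σ₁ σ₂ : ℝ → ℂ) (hσ₁m : Measurable σ₁) (hσ₂m : Measurable σ₂)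
    (hσ₁ : MemLp σ₁ p (volume.restrict (Icc (0:ℝ) 1)))
    (hσ₂ : MemLp σ₂ p (volume.restrict (Icc (0:ℝ) 1)))
    (r : ℝ) (hr : 0 ≤ r) :
    ∃ C > 0, ∀ μ : ℂ, -r < μ.im →
      gamma1 σ₁ q μ ≤ 1 / (2 * (2 * Real.exp (4*r) * (sigmaNorm σ₁ σ₂ p)^3)) →
      gamma2 σ₂ q μ ≤ 1 / (2 * (2 * Real.exp (4*r) * (sigmaNorm σ₁ σ₂ p)^3)) →
      ∀ w₁ w₂ : ℝ → ℂ, IsDiracSolution σ₁ σ₂ μ w₁ w₂ → w₁ 0 = 1 → w₂ 1 = 0 →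
        ∀ x ∈ Icc (0:ℝ) 1,
          ‖Complex.exp (-(Complex.I * μ * x)) * w₁ x - 1 + K1 σ₁ σ₂ μ eFun x‖
              ≤ C * gammaT σ₁ σ₂ μ
          ∧ ‖Complex.exp (-(Complex.I * μ * x)) * w₂ x
              - (∫ t in x..(1:ℝ), Complex.exp (2*Complex.I*μ*(t - x)) * σ₂ t)
              + ∫ t in x..(1:ℝ), Complex.exp (2*Complex.I*μ*(t - x)) * σ₂ t * K1 σ₁ σ₂ μ eFun t‖
              ≤ C * gammaT σ₁ σ₂ μ := by
  have hCone0 := Cone_nonneg σ₁ σ₂ p r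
  have hsN0 := sigmaNorm_nonneg σ₁ σ₂ p
  have hce0 : (0:ℝ) ≤ Real.exp (2*r) := (Real.exp_pos _).le
  have hcoef0 : (0:ℝ) ≤ 1 + Real.exp (2*r) * sigmaNorm σ₁ σ₂ p := by
    have := mul_nonneg hce0 hsN0
    linarith
  refine ⟨1 + (1 + Real.exp (2*r) * sigmaNorm σ₁ σ₂ p) * Cone σ₁ σ₂ p r, ?_, ?_⟩
  · have := mul_nonneg hcoef0 hCone0
    linarith
  intro μ hμim hγ1 hγ2 w₁ w₂ hsol hw10 hw21 x hx
  obtain ⟨g₁, g₂, hg₁i, hg₂i, hw₁rep, hw₂rep, hode₁, hode₂⟩ := hsol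
  have h01 : (0:ℝ) ≤ 1 := zero_le_one
  have hm0 : (0:ℝ) ∈ Icc (0:ℝ) 1 := ⟨le_rfl, h01⟩
  have hm1 : (1:ℝ) ∈ Icc (0:ℝ) 1 := ⟨h01, le_rfl⟩
  haveI hfin : IsFiniteMeasure (volume.restrict (Icc (0:ℝ) 1)) :=
    ⟨by rw [Measure.restrict_apply_univ, Real.volume_Icc]; exact ENNReal.ofReal_lt_top⟩
  have hσ₁int : IntegrableOn σ₁ (Icc (0:ℝ) 1) volume := hσ₁.integrable hp1
  have hσ₂int : IntegrableOn σ₂ (Icc (0:ℝ) 1) volume := hσ₂.integrable hp1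
  -- the normalized solution components
  set W₁ : ℝ → ℂ := fun y => 1 + ∫ t in (0:ℝ)..y, g₁ t with hW₁d
  set W₂ : ℝ → ℂ := fun y => w₂ 0 + ∫ t in (0:ℝ)..y, g₂ t with hW₂d
  have hW₁y : ∀ y, W₁ y = 1 + ∫ t in (0:ℝ)..y, g₁ t := fun y => rfl
  have hW₂y : ∀ y, W₂ y = w₂ 0 + ∫ t in (0:ℝ)..y, g₂ t := fun y => rfl
  have hw₁W : ∀ y ∈ Icc (0:ℝ) 1, w₁ y = W₁ y := fun y hy => by
    rw [hw₁rep y hy, hw10, hW₁y]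
  have hw₂W : ∀ y ∈ Icc (0:ℝ) 1, w₂ y = W₂ y := fun y hy => by
    rw [hw₂rep y hy, hW₂y]
  have hg₁uIcc : IntegrableOn g₁ (uIcc (0:ℝ) 1) volume := by
    rw [uIcc_of_le h01]; exact (integrableOn_Icc_iff_integrableOn_Ioc).mpr hg₁i.1
  have hg₂uIcc : IntegrableOn g₂ (uIcc (0:ℝ) 1) volume := by
    rw [uIcc_of_le h01]; exact (integrableOn_Icc_iff_integrableOn_Ioc).mpr hg₂i.1
  have hW₁cont : ContinuousOn W₁ (Icc (0:ℝ) 1) := by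
    have := intervalIntegral.continuousOn_primitive_interval hg₁uIcc
    rw [uIcc_of_le h01] at this
    exact continuousOn_const.add this
  have hW₂cont : ContinuousOn W₂ (Icc (0:ℝ) 1) := by
    have := intervalIntegral.continuousOn_primitive_interval hg₂uIcc
    rw [uIcc_of_le h01] at this
    exact continuousOn_const.add this
  set u : ℝ → ℂ := fun y => Complex.exp (-(Complex.I * μ * y)) * W₁ y with hud
  set V : ℝ → ℂ := fun y => Complex.exp (-(Complex.I * μ * y)) * W₂ y with hVd
  have hexpc : Continuous fun y : ℝ => Complex.exp (-(Complex.I * μ * y)) := by fun_prop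
  have hucont : ContinuousOn u (Icc (0:ℝ) 1) := hexpc.continuousOn.mul hW₁cont
  have hVcont : ContinuousOn V (Icc (0:ℝ) 1) := hexpc.continuousOn.mul hW₂cont
  -- equation E1
  have hae1 : ∀ᵐ s ∂(volume.restrict (Icc (0:ℝ) 1)),
      g₁ s + σ₁ s * W₂ s = Complex.I * μ * W₁ s := by
    filter_upwards [hode₁, ae_restrict_mem measurableSet_Icc] with s h1 h2
    rw [← hw₁W s h2, ← hw₂W s h2]
    exact h1
  have hu : ∀ y ∈ Icc (0:ℝ) 1, u y = 1 - ∫ t in (0:ℝ)..y, σ₁ t * V t :=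
    fun y hy => solution_E1 σ₁ μ g₁ W₁ W₂ hg₁i hW₁y hae1 hy
  -- equation E2
  have hae2 : ∀ᵐ s ∂(volume.restrict (Icc (0:ℝ) 1)),
      g₂ s + σ₂ s * W₁ s = -(Complex.I * μ) * W₂ s := by
    filter_upwards [hode₂, ae_restrict_mem measurableSet_Icc] with s h1 h2
    rw [← hw₁W s h2, ← hw₂W s h2]
    exact h1
  have hW₂0 : W₂ 0 = w₂ 0 := by rw [hW₂y]; simp
  have hW₂rep' : ∀ y, W₂ y = W₂ 0 + ∫ t in (0:ℝ)..y, g₂ t := fun y => by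
    rw [hW₂0, hW₂y]
  have hVeq : ∀ y ∈ Icc (0:ℝ) 1, Complex.exp (Complex.I * μ * y) * W₂ y
      = W₂ 0 - ∫ t in (0:ℝ)..y, Complex.exp (Complex.I * μ * t) * (σ₂ t * W₁ t) :=
    fun y hy => solution_E2 σ₂ μ g₂ W₁ W₂ hg₂i hW₂rep' hae2 hy
  have hW₂1 : W₂ 1 = 0 := by rw [← hw₂W 1 hm1]; exact hw21
  have hintE2 : IntegrableOn (fun t : ℝ => Complex.exp (Complex.I * μ * t) * (σ₂ t * W₁ t))
      (Icc (0:ℝ) 1) volume := by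
    have h1 : IntegrableOn (fun t => σ₂ t * W₁ t) (Icc (0:ℝ) 1) volume :=
      hσ₂int.mul_continuousOn hW₁cont isCompact_Icc
    exact IntegrableOn.continuousOn_mul (Continuous.continuousOn (by fun_prop)) h1 isCompact_Icc
  have hw20eq : W₂ 0 = ∫ t in (0:ℝ)..1, Complex.exp (Complex.I * μ * t) * (σ₂ t * W₁ t) := by
    have h := hVeq 1 hm1
    rw [hW₂1, mul_zero] at h
    linear_combination -h
  have hV : ∀ y ∈ Icc (0:ℝ) 1, V y = QQ σ₂ μ u y := by
    intro y hy
    have h1 : Complex.exp (Complex.I * μ * y) * W₂ y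
        = ∫ t in y..(1:ℝ), Complex.exp (Complex.I * μ * t) * (σ₂ t * W₁ t) := by
      rw [hVeq y hy, hw20eq]
      have hadd := intervalIntegral.integral_add_adjacent_intervals
        ((hintE2.mono_set (uIcc_subset_Icc hm0 hy)).intervalIntegrable)
        ((hintE2.mono_set (uIcc_subset_Icc hy hm1)).intervalIntegrable)
      linear_combination -hadd
    have h2 : V y = Complex.exp (-(2 * Complex.I * μ * y))
        * (Complex.exp (Complex.I * μ * y) * W₂ y) := by
      show Complex.exp (-(Complex.I * μ * y)) * W₂ y = _
      rw [← mul_assoc, ← Complex.exp_add]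
      congr 2
      ring
    rw [h2, h1, ← intervalIntegral.integral_const_mul]
    unfold QQ
    refine intervalIntegral.integral_congr fun s _ => ?_
    have hus : u s = Complex.exp (-(Complex.I * μ * s)) * W₁ s := rfl
    rw [hus]
    have e1 : Complex.exp (-(2 * Complex.I * μ * y))
        * (Complex.exp (Complex.I * μ * s) * (σ₂ s * W₁ s))
        = Complex.exp (-(2 * Complex.I * μ * y) + Complex.I * μ * s) * (σ₂ s * W₁ s) := by
      rw [Complex.exp_add]; ring
    have e2 : Complex.exp (2 * Complex.I * μ * ((s:ℂ) - y)) * σ₂ s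
        * (Complex.exp (-(Complex.I * μ * s)) * W₁ s)
        = Complex.exp (2 * Complex.I * μ * ((s:ℂ) - y) + -(Complex.I * μ * s))
          * (σ₂ s * W₁ s) := by
      rw [Complex.exp_add]; ring
    rw [e1, e2]
    congr 2
    ring
  -- apply the core estimate
  have hcore := core_est p q hp1 hpq σ₁ σ₂ hσ₁m hσ₂m hσ₁ hσ₂ hr hμim hγ2 u V
    hucont hVcont hu hV
  have hgT0 : 0 ≤ gammaT σ₁ σ₂ μ := gammaT_nonneg σ₁ σ₂ μ
  have hConeC : Cone σ₁ σ₂ p r * gammaT σ₁ σ₂ μ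
      ≤ (1 + (1 + Real.exp (2*r) * sigmaNorm σ₁ σ₂ p) * Cone σ₁ σ₂ p r)
        * gammaT σ₁ σ₂ μ := by
    apply mul_le_mul_of_nonneg_right ?_ hgT0
    have := mul_nonneg (mul_nonneg hce0 hsN0) hCone0
    nlinarith
  constructor
  · -- first component
    have h1 : Complex.exp (-(Complex.I * μ * x)) * w₁ x = u x := by
      rw [hw₁W x hx]
    rw [h1]
    exact le_trans (hcore x hx) hConeC
  · -- second component
    have hK1cont : ContinuousOn (K1 σ₁ σ₂ μ eFun) (Icc (0:ℝ) 1) :=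
      K1_eFun_continuousOn σ₁ σ₂ μ hσ₁int hσ₂int
    have hDcont : ContinuousOn (fun t => u t - 1 + K1 σ₁ σ₂ μ eFun t) (Icc (0:ℝ) 1) :=
      (hucont.sub continuousOn_const).add hK1cont
    have hEσIcc : ∀ y : ℝ, IntegrableOn
        (fun s : ℝ => Complex.exp (2 * Complex.I * μ * ((s:ℂ) - y)) * σ₂ s)
        (Icc (0:ℝ) 1) volume := fun y =>
      IntegrableOn.continuousOn_mul (Continuous.continuousOn (by fun_prop)) hσ₂int isCompact_Icc
    have hIIa : IntervalIntegrable (fun s : ℝ =>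
        Complex.exp (2 * Complex.I * μ * ((s:ℂ) - x)) * σ₂ s * u s) volume x 1 :=
      (((hEσIcc x).mul_continuousOn hucont isCompact_Icc).mono_set
        (uIcc_subset_Icc hx hm1)).intervalIntegrable
    have hIIb : IntervalIntegrable (fun s : ℝ =>
        Complex.exp (2 * Complex.I * μ * ((s:ℂ) - x)) * σ₂ s * eFun s) volume x 1 :=
      (((hEσIcc x).congr_fun (fun s _ => by simp [eFun]) measurableSet_Icc).mono_set
        (uIcc_subset_Icc hx hm1)).intervalIntegrable
    have hIIc : IntervalIntegrable (fun s : ℝ =>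
        Complex.exp (2 * Complex.I * μ * ((s:ℂ) - x)) * σ₂ s * K1 σ₁ σ₂ μ eFun s)
        volume x 1 :=
      (((hEσIcc x).mul_continuousOn hK1cont isCompact_Icc).mono_set
        (uIcc_subset_Icc hx hm1)).intervalIntegrable
    have hQlin : QQ σ₂ μ (fun t => u t - 1 + K1 σ₁ σ₂ μ eFun t) x
        = QQ σ₂ μ u x - QQ σ₂ μ eFun x + QQ σ₂ μ (K1 σ₁ σ₂ μ eFun) x := by
      unfold QQ
      rw [show (∫ s in x..(1:ℝ), Complex.exp (2 * Complex.I * μ * ((s:ℂ) - x)) * σ₂ s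
          * (u s - 1 + K1 σ₁ σ₂ μ eFun s))
        = ∫ s in x..(1:ℝ), ((Complex.exp (2 * Complex.I * μ * ((s:ℂ) - x)) * σ₂ s * u s
            - Complex.exp (2 * Complex.I * μ * ((s:ℂ) - x)) * σ₂ s * eFun s)
          + Complex.exp (2 * Complex.I * μ * ((s:ℂ) - x)) * σ₂ s * K1 σ₁ σ₂ μ eFun s)
        from intervalIntegral.integral_congr fun s _ => by simp only [eFun]; ring]
      rw [intervalIntegral.integral_add (hIIa.sub hIIb) hIIc,
        intervalIntegral.integral_sub hIIa hIIb]
    have hexprEq : Complex.exp (-(Complex.I * μ * x)) * w₂ x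
        - (∫ t in x..(1:ℝ), Complex.exp (2 * Complex.I * μ * (t - x)) * σ₂ t)
        + (∫ t in x..(1:ℝ), Complex.exp (2 * Complex.I * μ * (t - x)) * σ₂ t
            * K1 σ₁ σ₂ μ eFun t)
        = QQ σ₂ μ (fun t => u t - 1 + K1 σ₁ σ₂ μ eFun t) x := by
      rw [hQlin, hw₂W x hx, ← hV x hx]
      have hA : (∫ t in x..(1:ℝ), Complex.exp (2 * Complex.I * μ * (t - x)) * σ₂ t)
          = QQ σ₂ μ eFun x := by
        unfold QQ
        exact intervalIntegral.integral_congr fun t _ => by simp [eFun]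
      rw [hA]
      rfl
    rw [hexprEq]
    -- now bound ‖QQ σ₂ μ D x‖
    have hDb : ∀ s ∈ Icc (0:ℝ) 1, ‖u s - 1 + K1 σ₁ σ₂ μ eFun s‖
        ≤ Cone σ₁ σ₂ p r * gammaT σ₁ σ₂ μ := hcore
    have hIID : IntervalIntegrable (fun s : ℝ =>
        Complex.exp (2 * Complex.I * μ * ((s:ℂ) - x)) * σ₂ s
          * (u s - 1 + K1 σ₁ σ₂ μ eFun s)) volume x 1 :=
      (((hEσIcc x).mul_continuousOn hDcont isCompact_Icc).mono_set
        (uIcc_subset_Icc hx hm1)).intervalIntegrable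
    have hσ₂n : IntegrableOn (fun t => ‖σ₂ t‖) (Icc (0:ℝ) 1) volume := hσ₂int.norm
    have hIIn2 : IntervalIntegrable (fun t => ‖σ₂ t‖) volume x 1 :=
      (hσ₂n.mono_set (uIcc_subset_Icc hx hm1)).intervalIntegrable
    have hS2 : (∫ t in x..(1:ℝ), ‖σ₂ t‖) ≤ sigmaNorm σ₁ σ₂ p := by
      calc (∫ t in x..(1:ℝ), ‖σ₂ t‖) ≤ ∫ t in (0:ℝ)..1, ‖σ₂ t‖ :=
            intervalIntegral.integral_mono_interval hx.1 hx.2 le_rfl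
              (Filter.Eventually.of_forall fun t => norm_nonneg _)
              (hσ₂n.mono_set (uIcc_subset_Icc hm0 hm1)).intervalIntegrable
        _ ≤ sigmaNorm σ₁ σ₂ p := intnorm₂_le_sigmaNorm p hp1 σ₁ σ₂ hσ₁m hσ₂m hσ₁ hσ₂
    calc ‖QQ σ₂ μ (fun t => u t - 1 + K1 σ₁ σ₂ μ eFun t) x‖
        ≤ ∫ s in x..(1:ℝ), ‖Complex.exp (2 * Complex.I * μ * ((s:ℂ) - x)) * σ₂ s
            * (u s - 1 + K1 σ₁ σ₂ μ eFun s)‖ :=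
          intervalIntegral.norm_integral_le_integral_norm hx.2
      _ ≤ ∫ s in x..(1:ℝ), Real.exp (2*r)
            * (‖σ₂ s‖ * (Cone σ₁ σ₂ p r * gammaT σ₁ σ₂ μ)) := by
          apply intervalIntegral.integral_mono_on hx.2 hIID.norm
            ((hIIn2.mul_const _).const_mul _)
          intro s hs
          have hsm : s ∈ Icc (0:ℝ) 1 := ⟨le_trans hx.1 hs.1, hs.2⟩
          rw [norm_mul, norm_mul]
          have h1 : ‖Complex.exp (2 * Complex.I * μ * ((s:ℂ) - x))‖ ≤ Real.exp (2*r) :=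
            norm_exp_bound hr hμim hs.1 (by linarith [hx.1, hs.2])
          have h2 := hDb s hsm
          calc ‖Complex.exp (2 * Complex.I * μ * ((s:ℂ) - x))‖ * ‖σ₂ s‖
                * ‖u s - 1 + K1 σ₁ σ₂ μ eFun s‖
              ≤ Real.exp (2*r) * ‖σ₂ s‖ * (Cone σ₁ σ₂ p r * gammaT σ₁ σ₂ μ) := by
                apply mul_le_mul ?_ h2 (norm_nonneg _)
                  (mul_nonneg (Real.exp_nonneg _) (norm_nonneg _))
                exact mul_le_mul_of_nonneg_right h1 (norm_nonneg _)
            _ = Real.exp (2*r) * (‖σ₂ s‖ * (Cone σ₁ σ₂ p r * gammaT σ₁ σ₂ μ)) := by ring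
      _ ≤ Real.exp (2*r) * (sigmaNorm σ₁ σ₂ p * (Cone σ₁ σ₂ p r * gammaT σ₁ σ₂ μ)) := by
          rw [intervalIntegral.integral_const_mul, intervalIntegral.integral_mul_const]
          apply mul_le_mul_of_nonneg_left ?_ hce0
          exact mul_le_mul_of_nonneg_right hS2 (mul_nonneg hCone0 hgT0)
      _ ≤ (1 + (1 + Real.exp (2*r) * sigmaNorm σ₁ σ₂ p) * Cone σ₁ σ₂ p r)
            * gammaT σ₁ σ₂ μ := by
          have e : Real.exp (2*r) * (sigmaNorm σ₁ σ₂ p * (Cone σ₁ σ₂ p r * gammaT σ₁ σ₂ μ))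
              = (Real.exp (2*r) * sigmaNorm σ₁ σ₂ p * Cone σ₁ σ₂ p r) * gammaT σ₁ σ₂ μ := by
            ring
          rw [e]
          apply mul_le_mul_of_nonneg_right ?_ hgT0
          nlinarith [mul_nonneg (mul_nonneg hce0 hsN0) hCone0, hCone0]
end
end

section
/- Let r ≥ 0 and set a = 2 e^{4r} ‖σ‖_{L^p[0,1]}³. There exists a constant C > 0, depending only on r, σ₁, σ₂, such that for every μ ∈ ℂ with Im μ > −r satisfying γ₁(μ) ≤ 1/(2a) and γ₂(μ) ≤ 1/(2a): if (v₁,v₂) is a solution of the Dirac system with parameter μ satisfying v₁(0) = 0 and v₂(1) = 1, then for all x ∈ [0,1], |e^{−iμ(1−x)} v₁(x)| ≤ C (γ₁(μ) + γ₂(μ) + γ₀₁(x,μ) + γ₀₂(x,μ)) and |e^{−iμ(1−x)} v₂(x) − 1| ≤ C (γ₁(μ) + γ₂(μ) + γ₀₁(x,μ) + γ₀₂(x,μ)). -/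
open MeasureTheory Set
open scoped ENNReal

noncomputable section

lemma st11_ii {f : ℝ → ℂ} (hf : IntegrableOn f (Icc 0 1) volume) {a b : ℝ}
    (ha : a ∈ Icc (0:ℝ) 1) (hb : b ∈ Icc (0:ℝ) 1) : IntervalIntegrable f volume a b := by
  rw [intervalIntegrable_iff]
  refine hf.mono_set (fun t ht => ?_)
  exact ⟨(le_min ha.1 hb.1).trans ht.1.le, ht.2.trans (max_le ha.2 hb.2)⟩

lemma st11_mul {σ : ℝ → ℂ} (hσ : IntegrableOn σ (Icc 0 1) volume) {w : ℝ → ℂ}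
    (hw : ContinuousOn w (Icc (0:ℝ) 1)) :
    IntegrableOn (fun t => σ t * w t) (Icc 0 1) volume :=
  hσ.mul_continuousOn hw isCompact_Icc

lemma st11_norm_exp {μ : ℂ} {r : ℝ} (hr : 0 ≤ r) (hμ : -r ≤ μ.im) {w : ℝ}
    (hw0 : 0 ≤ w) (hw1 : w ≤ 1) :
    ‖Complex.exp (2 * Complex.I * μ * (w : ℂ))‖ ≤ Real.exp (2 * r) := by
  rw [Complex.norm_exp]
  apply Real.exp_le_exp.mpr
  have hre : (2 * Complex.I * μ * (w : ℂ)).re = -2 * μ.im * w := by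
    simp [Complex.mul_re, Complex.mul_im]
  rw [hre]
  nlinarith [neg_le_of_neg_le hμ]

lemma st11_norm_exp' {μ : ℂ} {r : ℝ} (hr : 0 ≤ r) (hμ : -r ≤ μ.im) {x s : ℝ}
    (h0 : 0 ≤ s) (hsx : s ≤ x) (hx1 : x ≤ 1) :
    ‖Complex.exp (2 * Complex.I * μ * ((x : ℂ) - s))‖ ≤ Real.exp (2 * r) := by
  rw [show ((x:ℂ) - s) = ((x - s : ℝ) : ℂ) by push_cast; ring]
  exact st11_norm_exp hr hμ (by linarith) (by linarith)

lemma st11_exp_shift (σ₁ : ℝ → ℂ) (μ : ℂ) (t s : ℝ) :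
    ∫ τ in (0:ℝ)..s, Complex.exp (2 * Complex.I * μ * (t - τ)) * σ₁ τ
      = Complex.exp (2 * Complex.I * μ * ((t : ℂ) - s)) *
        ∫ τ in (0:ℝ)..s, Complex.exp (2 * Complex.I * μ * (s - τ)) * σ₁ τ := by
  rw [← intervalIntegral.integral_const_mul]
  refine intervalIntegral.integral_congr (fun τ _ => ?_)
  rw [← mul_assoc, ← Complex.exp_add]
  congr 2
  ring

lemma st11_gamma01_shift_bound {σ₁ : ℝ → ℂ} {μ : ℂ} {r : ℝ} (hr : 0 ≤ r) (hμ : -r ≤ μ.im)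
    {t s : ℝ} (hs : 0 ≤ s) (hst : s ≤ t) (ht : t ≤ 1) :
    ‖∫ τ in (0:ℝ)..s, Complex.exp (2 * Complex.I * μ * (t - τ)) * σ₁ τ‖
      ≤ Real.exp (2 * r) * gamma01 σ₁ μ s := by
  rw [st11_exp_shift, norm_mul]
  refine mul_le_mul ?_ le_rfl (norm_nonneg _) (Real.exp_pos _).le
  have : ((t : ℂ) - s) = ((t - s : ℝ) : ℂ) := by push_cast; ring
  rw [this]
  exact st11_norm_exp hr hμ (by linarith) (by linarith)

lemma st11_gamma01_contOn (σ₁ : ℝ → ℂ) (μ : ℂ)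
    (h : IntegrableOn σ₁ (Icc 0 1) volume) :
    ContinuousOn (gamma01 σ₁ μ) (Icc (0:ℝ) 1) := by
  have heq : ∀ x : ℝ, gamma01 σ₁ μ x
      = ‖Complex.exp (2 * Complex.I * μ * (x : ℂ)) *
          ∫ t in (0:ℝ)..x, Complex.exp (2 * Complex.I * μ * (0 - t)) * σ₁ t‖ := by
    intro x
    unfold gamma01
    congr 1
    rw [← intervalIntegral.integral_const_mul]
    refine intervalIntegral.integral_congr (fun τ _ => ?_)
    rw [← mul_assoc, ← Complex.exp_add]
    congr 2
    ring
  have hc1 : Continuous (fun x : ℝ => Complex.exp (2 * Complex.I * μ * (x : ℂ))) :=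
    Complex.continuous_exp.comp (continuous_const.mul Complex.continuous_ofReal)
  have hc2 : ContinuousOn (fun x : ℝ =>
      ∫ t in (0:ℝ)..x, Complex.exp (2 * Complex.I * μ * (0 - t)) * σ₁ t) (Icc (0:ℝ) 1) := by
    have hce : Continuous (fun t : ℝ => Complex.exp (2 * Complex.I * μ * (0 - (t:ℂ)))) :=
      Complex.continuous_exp.comp (continuous_const.mul
        (continuous_const.sub Complex.continuous_ofReal))
    have : IntegrableOn (fun t : ℝ => Complex.exp (2 * Complex.I * μ * (0 - t)) * σ₁ t)
        (uIcc (0:ℝ) 1) volume := by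
      rw [uIcc_of_le (by norm_num : (0:ℝ) ≤ 1)]
      exact IntegrableOn.continuousOn_mul hce.continuousOn h isCompact_Icc
    have := intervalIntegral.continuousOn_primitive_interval (μ := volume) this
    rwa [uIcc_of_le (by norm_num : (0:ℝ) ≤ 1)] at this
  refine ((hc1.continuousOn.mul hc2).norm).congr (fun y _ => heq y)

lemma st11_prob : IsProbabilityMeasure (volume.restrict (Icc (0:ℝ) 1)) := by
  constructor
  rw [Measure.restrict_apply_univ, Real.volume_Icc]
  norm_num

lemma st11_int_le_eLpNorm_toReal {f : ℝ → ℝ} (hf : IntegrableOn f (Icc 0 1) volume)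
    (hfm : AEStronglyMeasurable f (volume.restrict (Icc (0:ℝ) 1)))
    {p : ℝ≥0∞} (hp1 : 1 ≤ p) (hfin : eLpNorm f p (volume.restrict (Icc (0:ℝ) 1)) ≠ ⊤) :
    ∫ t in (0:ℝ)..1, f t ≤ (eLpNorm f p (volume.restrict (Icc (0:ℝ) 1))).toReal := by
  haveI := st11_prob
  set μ0 := volume.restrict (Icc (0:ℝ) 1)
  have h1 : ∫ t in (0:ℝ)..1, f t ≤ ∫ t in Icc (0:ℝ) 1, ‖f t‖ := by
    rw [intervalIntegral.integral_of_le (by norm_num : (0:ℝ) ≤ 1),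
      ← integral_Icc_eq_integral_Ioc]
    exact integral_mono hf hf.norm (fun t => le_abs_self (f t))
  have h2 : ∫ t in Icc (0:ℝ) 1, ‖f t‖ = (eLpNorm f 1 μ0).toReal := by
    rw [eLpNorm_one_eq_lintegral_enorm]
    exact integral_norm_eq_lintegral_enorm hfm
  have h3 : eLpNorm f 1 μ0 ≤ eLpNorm f p μ0 := eLpNorm_le_eLpNorm_of_exponent_le hp1 hfm
  calc ∫ t in (0:ℝ)..1, f t ≤ (eLpNorm f 1 μ0).toReal := h1.trans_eq h2
    _ ≤ _ := ENNReal.toReal_mono hfin h3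

lemma st11_holder {p q : ℝ≥0∞} (hp1 : 1 ≤ p) (hpq : 1/p + 1/q = 1)
    (σ : ℝ → ℂ) (hσ : MemLp σ p (volume.restrict (Icc (0:ℝ) 1)))
    (G : ℝ → ℝ) (hG : ContinuousOn G (Icc (0:ℝ) 1)) :
    ∫ t in (0:ℝ)..1, ‖σ t‖ * G t ≤
      (eLpNorm σ p (volume.restrict (Icc (0:ℝ) 1))).toReal *
      (eLpNorm G q (volume.restrict (Icc (0:ℝ) 1))).toReal := by
  set μ0 := volume.restrict (Icc (0:ℝ) 1) with hμ0
  have hGm : AEStronglyMeasurable G μ0 := hG.aestronglyMeasurable measurableSet_Icc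
  have hGfin : eLpNorm G q μ0 ≠ ⊤ := by
    obtain ⟨C, hC⟩ := isCompact_Icc.exists_bound_of_continuousOn hG
    have hae : ∀ᵐ x ∂μ0, ‖G x‖ ≤ C :=
      (ae_restrict_iff' measurableSet_Icc).mpr (ae_of_all _ hC)
    exact ((eLpNorm_le_of_ae_bound hae).trans_lt (by
      apply ENNReal.mul_lt_top <;> simp [ENNReal.rpow_lt_top_of_nonneg]
      )).ne
  have hσm : AEStronglyMeasurable (fun t => ‖σ t‖) μ0 := hσ.1.norm
  have hprod : eLpNorm (fun t => ‖σ t‖ * G t) 1 μ0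
      ≤ eLpNorm (fun t => ‖σ t‖) p μ0 * eLpNorm G q μ0 := by
    haveI : ENNReal.HolderTriple p q 1 := ⟨by simpa [one_div] using hpq⟩
    have := eLpNorm_le_eLpNorm_mul_eLpNorm'_of_norm (p := p) (q := q) (r := 1) hσm hGm
      (fun a b => a * b) 1 (ae_of_all _ (fun t => by rw [norm_mul]; simp))
    simpa only [ENNReal.coe_one, one_mul] using this
  rw [eLpNorm_norm] at hprod
  have hfin1 : eLpNorm (fun t => ‖σ t‖ * G t) 1 μ0 ≠ ⊤ :=
    (hprod.trans_lt (ENNReal.mul_lt_top hσ.2 hGfin.lt_top)).ne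
  have hσint : IntegrableOn (fun t => ‖σ t‖) (Icc 0 1) volume := (hσ.integrable hp1).norm
  have hint : IntegrableOn (fun t => ‖σ t‖ * G t) (Icc 0 1) volume :=
    hσint.mul_continuousOn hG isCompact_Icc
  have h1 := st11_int_le_eLpNorm_toReal hint (hσm.mul hGm) (le_refl 1) hfin1
  refine h1.trans ?_
  rw [← ENNReal.toReal_mul]
  exact ENNReal.toReal_mono (ENNReal.mul_ne_top hσ.2.ne hGfin) hprod

lemma st11_hasDerivAt_cexp_mul (c : ℂ) (t : ℝ) :
    HasDerivAt (fun t : ℝ => Complex.exp (c * t)) (c * Complex.exp (c * t)) t := by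
  have h1 : HasDerivAt (fun t : ℝ => (t : ℂ)) 1 t := Complex.ofRealCLM.hasDerivAt
  have h2 : HasDerivAt (fun t : ℝ => c * (t : ℂ)) c t := by simpa using h1.const_mul c
  simpa [mul_comm] using h2.cexp

lemma st11_continuous_cexp_mul (c : ℂ) : Continuous (fun t : ℝ => Complex.exp (c * t)) :=
  Complex.continuous_exp.comp (continuous_const.mul Complex.continuous_ofReal)

lemma st11_integral_cexp_mul (c : ℂ) (a b : ℝ) :
    ∫ t in a..b, c * Complex.exp (c * t)
      = Complex.exp (c * b) - Complex.exp (c * a) := by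
  refine intervalIntegral.integral_eq_sub_of_hasDerivAt
    (fun t _ => st11_hasDerivAt_cexp_mul c t) ?_
  exact (continuous_const.mul (st11_continuous_cexp_mul c)).intervalIntegrable a b

lemma st11_swap (f g : ℝ → ℂ) {x : ℝ} (hx0 : 0 ≤ x)
    (hf : IntegrableOn f (Ioc 0 x)) (hg : IntegrableOn g (Ioc 0 x)) :
    ∫ t in (0:ℝ)..x, f t * ∫ s in (0:ℝ)..t, g s
      = ∫ s in (0:ℝ)..x, (∫ t in s..x, f t) * g s := by
  have hT : MeasurableSet {p : ℝ × ℝ | p.2 ≤ p.1} :=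
    measurableSet_le measurable_snd measurable_fst
  set Φ : ℝ × ℝ → ℂ := ({p : ℝ × ℝ | p.2 ≤ p.1}).indicator (fun p => f p.1 * g p.2) with hΦ
  have hint : Integrable (Φ ∘ (fun p : ℝ × ℝ => p))
      ((volume.restrict (Ioc 0 x)).prod (volume.restrict (Ioc 0 x))) := by
    exact (Integrable.mul_prod hf hg).indicator hT
  have hswap :
      ∫ t in Ioc 0 x, ∫ s in Ioc 0 x, Φ (t, s) = ∫ s in Ioc 0 x, ∫ t in Ioc 0 x, Φ (t, s) := by
    exact integral_integral_swap hint
  have hL : ∫ t in (0:ℝ)..x, f t * ∫ s in (0:ℝ)..t, g s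
      = ∫ t in Ioc 0 x, ∫ s in Ioc 0 x, Φ (t, s) := by
    rw [intervalIntegral.integral_of_le hx0]
    refine setIntegral_congr_fun measurableSet_Ioc (fun t ht => ?_)
    have h1 : ∫ s in Ioc 0 x, Φ (t, s) = ∫ s in (Iic t) ∩ (Ioc 0 x), f t * g s := by
      have : Φ ∘ (fun s => (t, s)) = (Iic t).indicator (fun s => f t * g s) := by
        funext s
        by_cases h : s ≤ t
        · simp [hΦ, Set.indicator_of_mem, h, Set.mem_Iic.mpr h, Set.indicator_apply]
        · simp [hΦ, Set.indicator_apply, h]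
      calc ∫ s in Ioc 0 x, Φ (t, s) = ∫ s in Ioc 0 x, (Iic t).indicator (fun s => f t * g s) s := by
            refine setIntegral_congr_fun measurableSet_Ioc (fun s _ => ?_)
            exact congrFun this s
        _ = ∫ s in (Iic t) ∩ (Ioc 0 x), f t * g s := by
            rw [integral_indicator measurableSet_Iic, Measure.restrict_restrict measurableSet_Iic]
    rw [h1]
    have h2 : Iic t ∩ Ioc 0 x = Ioc 0 t := by
      ext s; simp only [mem_inter_iff, mem_Iic, mem_Ioc]
      constructor
      · rintro ⟨h1, h2, h3⟩; exact ⟨h2, h1⟩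
      · rintro ⟨h1, h2⟩; exact ⟨h2, h1, h2.trans ht.2⟩
    rw [h2, intervalIntegral.integral_of_le ht.1.le, ← integral_const_mul]
  have hR : ∫ s in (0:ℝ)..x, (∫ t in s..x, f t) * g s
      = ∫ s in Ioc 0 x, ∫ t in Ioc 0 x, Φ (t, s) := by
    rw [intervalIntegral.integral_of_le hx0]
    refine setIntegral_congr_fun measurableSet_Ioc (fun s hs => ?_)
    have h1 : ∫ t in Ioc 0 x, Φ (t, s) = ∫ t in (Ici s) ∩ (Ioc 0 x), f t * g s := by
      calc ∫ t in Ioc 0 x, Φ (t, s) = ∫ t in Ioc 0 x, (Ici s).indicator (fun t => f t * g s) t := by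
            refine setIntegral_congr_fun measurableSet_Ioc (fun t _ => ?_)
            by_cases h : s ≤ t
            · simp [hΦ, Set.indicator_apply, h]
            · simp [hΦ, Set.indicator_apply, h]
        _ = _ := by
            rw [integral_indicator measurableSet_Ici, Measure.restrict_restrict measurableSet_Ici]
    rw [h1]
    have h2 : Ici s ∩ Ioc 0 x = Icc s x := by
      ext t; simp only [mem_inter_iff, mem_Ici, mem_Ioc, mem_Icc]
      constructor
      · rintro ⟨h1, _, h3⟩; exact ⟨h1, h3⟩
      · rintro ⟨h1, h2⟩; exact ⟨h1, hs.1.trans_le h1, h2⟩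
    rw [h2, integral_Icc_eq_integral_Ioc, intervalIntegral.integral_of_le hs.2,
      ← integral_mul_const]
  rw [hL, hswap, ← hR]

lemma st11_expFormula (c : ℂ) (g v : ℝ → ℂ) (hg : IntegrableOn g (Icc 0 1) volume)
    (hv : ∀ t ∈ Icc (0:ℝ) 1, v t = v 0 + ∫ s in (0:ℝ)..t, g s)
    {x : ℝ} (hx : x ∈ Icc (0:ℝ) 1) :
    Complex.exp (c * x) * v x
      = v 0 + ∫ t in (0:ℝ)..x, Complex.exp (c * t) * (g t + c * v t) := by
  obtain ⟨hx0, hx1⟩ := hx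
  have hIoc : Ioc (0:ℝ) x ⊆ Icc 0 1 := fun t ht => ⟨ht.1.le, ht.2.trans hx1⟩
  have huIcc : uIcc (0:ℝ) x = Icc 0 x := uIcc_of_le hx0
  have hgx : IntegrableOn g (Ioc 0 x) := hg.mono_set hIoc
  have hgI : IntervalIntegrable g volume 0 x := by
    rw [intervalIntegrable_iff_integrableOn_Ioc_of_le hx0]; exact hgx
  set P : ℝ → ℂ := fun t => ∫ s in (0:ℝ)..t, g s with hP
  have hPcont : ContinuousOn P (Icc 0 x) := by
    have := intervalIntegral.continuousOn_primitive_interval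
      (f := g) (μ := volume) (a := (0:ℝ)) (b := x)
      (by rw [huIcc]; exact hg.mono_set (fun t ht => ⟨ht.1, ht.2.trans hx1⟩))
    rwa [huIcc] at this
  have hEc : Continuous (fun t : ℝ => Complex.exp (c * t)) := st11_continuous_cexp_mul c
  have h1 : IntervalIntegrable (fun t => Complex.exp (c * t) * g t) volume 0 x :=
    hgI.continuousOn_mul (hEc.continuousOn)
  have h2 : IntervalIntegrable (fun t => c * Complex.exp (c * t) * v 0) volume 0 x :=
    (((continuous_const.mul hEc).mul continuous_const)).intervalIntegrable 0 x
  have h3 : IntervalIntegrable (fun t => c * Complex.exp (c * t) * P t) volume 0 x := by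
    apply ContinuousOn.intervalIntegrable
    rw [huIcc]
    exact ((continuous_const.mul hEc).continuousOn).mul hPcont
  have hcongr : ∫ t in (0:ℝ)..x, Complex.exp (c * t) * (g t + c * v t)
      = ∫ t in (0:ℝ)..x, (Complex.exp (c * t) * g t
          + (c * Complex.exp (c * t) * v 0 + c * Complex.exp (c * t) * P t)) := by
    refine intervalIntegral.integral_congr (fun t ht => ?_)
    rw [huIcc] at ht
    rw [hv t ⟨ht.1, ht.2.trans hx1⟩]
    ring
  rw [hcongr, intervalIntegral.integral_add h1 (h2.add h3),
    intervalIntegral.integral_add h2 h3]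
  have hB : ∫ t in (0:ℝ)..x, c * Complex.exp (c * t) * v 0
      = (Complex.exp (c * x) - 1) * v 0 := by
    rw [intervalIntegral.integral_mul_const, st11_integral_cexp_mul]
    simp
  have hC : ∫ t in (0:ℝ)..x, c * Complex.exp (c * t) * P t
      = Complex.exp (c * x) * P x - ∫ s in (0:ℝ)..x, Complex.exp (c * s) * g s := by
    have hswap := st11_swap (fun t => c * Complex.exp (c * t)) g hx0
      ((continuous_const.mul hEc).integrableOn_Ioc) hgx
    rw [hP]; simp only []
    rw [hswap]
    have hcongr2 : ∀ s ∈ uIcc (0:ℝ) x, (∫ t in s..x, c * Complex.exp (c * t)) * g s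
        = Complex.exp (c * x) * g s - Complex.exp (c * s) * g s := by
      intro s _
      rw [st11_integral_cexp_mul]; ring
    rw [intervalIntegral.integral_congr hcongr2,
      intervalIntegral.integral_sub (hgI.const_mul _) h1,
      intervalIntegral.integral_const_mul]
  rw [hB, hC, hv x ⟨hx0, hx1⟩]
  ring

set_option maxHeartbeats 4000000 in
/-- rough asymptotics of `(v₁,v₂)`. -/
theorem stmt11
    (p q : ℝ≥0∞) (hp1 : 1 ≤ p) (hp2 : p < 2) (hpq : 1/p + 1/q = 1)
    (σ₁ σ₂ : ℝ → ℂ) (hσ₁m : Measurable σ₁) (hσ₂m : Measurable σ₂)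
    (hσ₁ : MemLp σ₁ p (volume.restrict (Icc (0:ℝ) 1)))
    (hσ₂ : MemLp σ₂ p (volume.restrict (Icc (0:ℝ) 1)))
    (r : ℝ) (hr : 0 ≤ r) :
    ∃ C > 0, ∀ μ : ℂ, -r < μ.im →
      gamma1 σ₁ q μ ≤ 1 / (2 * (2 * Real.exp (4*r) * (sigmaNorm σ₁ σ₂ p)^3)) →
      gamma2 σ₂ q μ ≤ 1 / (2 * (2 * Real.exp (4*r) * (sigmaNorm σ₁ σ₂ p)^3)) →
      ∀ v₁ v₂ : ℝ → ℂ, IsDiracSolution σ₁ σ₂ μ v₁ v₂ → v₁ 0 = 0 → v₂ 1 = 1 →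
        ∀ x ∈ Icc (0:ℝ) 1,
          ‖Complex.exp (-(Complex.I * μ * (1 - x))) * v₁ x‖
              ≤ C * (gamma1 σ₁ q μ + gamma2 σ₂ q μ + gamma01 σ₁ μ x + gamma02 σ₂ μ x)
          ∧ ‖Complex.exp (-(Complex.I * μ * (1 - x))) * v₂ x - 1‖
              ≤ C * (gamma1 σ₁ q μ + gamma2 σ₂ q μ + gamma01 σ₁ μ x + gamma02 σ₂ μ x) := by
  classical
  have hS0 : 0 ≤ sigmaNorm σ₁ σ₂ p := ENNReal.toReal_nonneg
  set S := sigmaNorm σ₁ σ₂ p with hSdef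
  set a := 2 * Real.exp (4*r) * S^3 with hadef
  have ha0 : 0 ≤ a := by positivity
  have he2 : (1:ℝ) ≤ Real.exp (2*r) := by
    rw [show (1:ℝ) = Real.exp 0 by simp]
    exact Real.exp_le_exp.mpr (by linarith)
  have hCpos : 0 < 1 + (4*S + 6*a) * (1 + Real.exp (2*r) * S) := by
    have h1 : (0:ℝ) ≤ 4*S + 6*a := by linarith
    have h2 : (0:ℝ) ≤ 1 + Real.exp (2*r) * S := by nlinarith
    nlinarith
  refine ⟨1 + (4*S + 6*a) * (1 + Real.exp (2*r) * S), hCpos, ?_⟩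
  intro μ hμim hγ1le hγ2le v₁ v₂ hsol hv10 hv21 x hx
  obtain ⟨g₁, g₂, hg₁I, hg₂I, hrep₁, hrep₂, hode₁, hode₂⟩ := hsol
  have hμr : -r ≤ μ.im := hμim.le
  have h01 : (0:ℝ) ≤ 1 := by norm_num
  have hIcc0 : (0:ℝ) ∈ Icc (0:ℝ) 1 := ⟨le_refl _, h01⟩
  have hIcc1 : (1:ℝ) ∈ Icc (0:ℝ) 1 := ⟨h01, le_refl _⟩
  have hσ₁int : IntegrableOn σ₁ (Icc 0 1) volume := hσ₁.integrable hp1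
  have hσ₂int : IntegrableOn σ₂ (Icc 0 1) volume := hσ₂.integrable hp1
  have hg₁int : IntegrableOn g₁ (Icc 0 1) volume := by
    rw [integrableOn_Icc_iff_integrableOn_Ioc]
    exact (intervalIntegrable_iff_integrableOn_Ioc_of_le h01).mp hg₁I
  have hg₂int : IntegrableOn g₂ (Icc 0 1) volume := by
    rw [integrableOn_Icc_iff_integrableOn_Ioc]
    exact (intervalIntegrable_iff_integrableOn_Ioc_of_le h01).mp hg₂I
  -- continuity of v₁ v₂
  have hprim₁ : ContinuousOn (fun t => v₁ 0 + ∫ s in (0:ℝ)..t, g₁ s) (Icc (0:ℝ) 1) := by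
    refine continuousOn_const.add ?_
    have := intervalIntegral.continuousOn_primitive_interval (μ := volume)
      (a := (0:ℝ)) (b := 1) (by rw [uIcc_of_le h01]; exact hg₁int)
    rwa [uIcc_of_le h01] at this
  have hprim₂ : ContinuousOn (fun t => v₂ 0 + ∫ s in (0:ℝ)..t, g₂ s) (Icc (0:ℝ) 1) := by
    refine continuousOn_const.add ?_
    have := intervalIntegral.continuousOn_primitive_interval (μ := volume)
      (a := (0:ℝ)) (b := 1) (by rw [uIcc_of_le h01]; exact hg₂int)
    rwa [uIcc_of_le h01] at this
  have hv₁cont : ContinuousOn v₁ (Icc (0:ℝ) 1) := hprim₁.congr (fun t ht => hrep₁ t ht)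
  have hv₂cont : ContinuousOn v₂ (Icc (0:ℝ) 1) := hprim₂.congr (fun t ht => hrep₂ t ht)
  -- integral identities
  have hH1 : ∀ y ∈ Icc (0:ℝ) 1, Complex.exp (-(Complex.I*μ) * y) * v₁ y
      = -∫ t in (0:ℝ)..y, Complex.exp (-(Complex.I*μ) * t) * (σ₁ t * v₂ t) := by
    intro y hy
    rw [st11_expFormula (-(Complex.I*μ)) g₁ v₁ hg₁int hrep₁ hy, hv10, zero_add,
      ← intervalIntegral.integral_neg]
    rw [intervalIntegral.integral_of_le hy.1, intervalIntegral.integral_of_le hy.1]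
    refine integral_congr_ae ?_
    have h := ae_restrict_of_ae_restrict_of_subset
      (fun t (ht : t ∈ Ioc (0:ℝ) y) => (⟨ht.1.le, ht.2.trans hy.2⟩ : t ∈ Icc (0:ℝ) 1)) hode₁
    filter_upwards [h] with t ht
    have hgt : g₁ t + -(Complex.I*μ) * v₁ t = -(σ₁ t * v₂ t) := by linear_combination ht
    rw [hgt]; ring
  have hH2 : ∀ y ∈ Icc (0:ℝ) 1, Complex.exp ((Complex.I*μ) * y) * v₂ y
      = v₂ 0 - ∫ t in (0:ℝ)..y, Complex.exp ((Complex.I*μ) * t) * (σ₂ t * v₁ t) := by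
    intro y hy
    rw [st11_expFormula (Complex.I*μ) g₂ v₂ hg₂int hrep₂ hy, sub_eq_add_neg,
      ← intervalIntegral.integral_neg]
    congr 1
    rw [intervalIntegral.integral_of_le hy.1, intervalIntegral.integral_of_le hy.1]
    refine integral_congr_ae ?_
    have h := ae_restrict_of_ae_restrict_of_subset
      (fun t (ht : t ∈ Ioc (0:ℝ) y) => (⟨ht.1.le, ht.2.trans hy.2⟩ : t ∈ Icc (0:ℝ) 1)) hode₂
    filter_upwards [h] with t ht
    have hgt : g₂ t + (Complex.I*μ) * v₂ t = -(σ₂ t * v₁ t) := by linear_combination ht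
    rw [hgt]; ring
  -- definition of E and basic facts
  set E : ℝ → ℂ := fun t => Complex.exp (-(Complex.I * μ * (1 - (t:ℂ)))) with hE
  have hEsplit : ∀ t : ℝ, E t = Complex.exp (-(Complex.I*μ)) * Complex.exp ((Complex.I*μ) * t) := by
    intro t; simp only [hE]; rw [← Complex.exp_add]; congr 1; ring
  have hEcont : Continuous E := by
    rw [hE]
    exact Complex.continuous_exp.comp
      ((continuous_const.mul (continuous_const.sub Complex.continuous_ofReal)).neg)
  have hucont : ContinuousOn (fun t => E t * v₁ t) (Icc (0:ℝ) 1) :=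
    hEcont.continuousOn.mul hv₁cont
  have hzcont : ContinuousOn (fun t => E t * v₂ t) (Icc (0:ℝ) 1) :=
    hEcont.continuousOn.mul hv₂cont
  have hexp2cont : ∀ y : ℝ, Continuous (fun t : ℝ => Complex.exp (2*Complex.I*μ*((y:ℂ) - t))) :=
    fun y => Complex.continuous_exp.comp
      (continuous_const.mul (continuous_const.sub Complex.continuous_ofReal))
  -- A₂ integrable
  have hA₂ : IntegrableOn (fun t : ℝ => Complex.exp ((Complex.I*μ) * t) * (σ₂ t * v₁ t)) (Icc 0 1) volume :=
    IntegrableOn.continuousOn_mul (st11_continuous_cexp_mul (Complex.I*μ)).continuousOn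
      (st11_mul hσ₂int hv₁cont) isCompact_Icc
  have hσ₂u : IntegrableOn (fun τ : ℝ => σ₂ τ * (E τ * v₁ τ)) (Icc 0 1) volume :=
    st11_mul hσ₂int hucont
  -- (★★)
  have hzsub : ∀ y ∈ Icc (0:ℝ) 1, E y * v₂ y - 1 = ∫ t in y..1, σ₂ t * (E t * v₁ t) := by
    intro y hy
    have hone : Complex.exp (-(Complex.I*μ)) * (Complex.exp ((Complex.I*μ) * (1:ℝ)) * v₂ 1) = 1 := by
      rw [hv21, mul_one, ← Complex.exp_add]
      rw [show -(Complex.I*μ) + (Complex.I*μ) * ((1:ℝ):ℂ) = 0 by push_cast; ring]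
      exact Complex.exp_zero
    calc E y * v₂ y - 1
        = Complex.exp (-(Complex.I*μ)) * ((Complex.exp ((Complex.I*μ) * y) * v₂ y)
            - (Complex.exp ((Complex.I*μ) * (1:ℝ)) * v₂ 1)) := by
          rw [hEsplit y]; linear_combination hone
      _ = Complex.exp (-(Complex.I*μ)) *
            ((∫ t in (0:ℝ)..1, Complex.exp ((Complex.I*μ) * t) * (σ₂ t * v₁ t))
              - ∫ t in (0:ℝ)..y, Complex.exp ((Complex.I*μ) * t) * (σ₂ t * v₁ t)) := by
          rw [hH2 y hy, hH2 1 hIcc1]; ring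
      _ = Complex.exp (-(Complex.I*μ)) *
            ∫ t in y..1, Complex.exp ((Complex.I*μ) * t) * (σ₂ t * v₁ t) := by
          rw [intervalIntegral.integral_interval_sub_left (st11_ii hA₂ hIcc0 hIcc1)
            (st11_ii hA₂ hIcc0 hy)]
      _ = ∫ t in y..1, Complex.exp (-(Complex.I*μ)) *
            (Complex.exp ((Complex.I*μ) * t) * (σ₂ t * v₁ t)) := by
          rw [intervalIntegral.integral_const_mul]
      _ = ∫ t in y..1, σ₂ t * (E t * v₁ t) := by
          refine intervalIntegral.integral_congr (fun t _ => ?_)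
          rw [hEsplit t]; ring
  -- (★)
  have hustar : ∀ y ∈ Icc (0:ℝ) 1, E y * v₁ y
      = -∫ t in (0:ℝ)..y, Complex.exp (2*Complex.I*μ*((y:ℂ) - t)) * (σ₁ t * (E t * v₂ t)) := by
    intro y hy
    have hone : Complex.exp ((Complex.I*μ) * y) * Complex.exp (-(Complex.I*μ) * y) = 1 := by
      rw [← Complex.exp_add, show (Complex.I*μ) * (y:ℂ) + -(Complex.I*μ) * y = 0 by ring]
      exact Complex.exp_zero
    calc E y * v₁ y
        = E y * Complex.exp ((Complex.I*μ) * y) * (Complex.exp (-(Complex.I*μ) * y) * v₁ y) := by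
          linear_combination (E y * v₁ y) * hone.symm
      _ = E y * Complex.exp ((Complex.I*μ) * y) *
            (-∫ t in (0:ℝ)..y, Complex.exp (-(Complex.I*μ) * t) * (σ₁ t * v₂ t)) := by
          rw [hH1 y hy]
      _ = -∫ t in (0:ℝ)..y, E y * Complex.exp ((Complex.I*μ) * y) *
            (Complex.exp (-(Complex.I*μ) * t) * (σ₁ t * v₂ t)) := by
          rw [mul_neg, ← intervalIntegral.integral_const_mul]
      _ = -∫ t in (0:ℝ)..y, Complex.exp (2*Complex.I*μ*((y:ℂ) - t)) * (σ₁ t * (E t * v₂ t)) := by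
          congr 1
          refine intervalIntegral.integral_congr (fun t _ => ?_)
          simp only [hE]
          have e1 : Complex.exp (-(Complex.I * μ * (1 - (y:ℂ)))) * Complex.exp ((Complex.I*μ) * y)
              * Complex.exp (-(Complex.I*μ) * t)
              = Complex.exp (2*Complex.I*μ*((y:ℂ) - t)) * Complex.exp (-(Complex.I * μ * (1 - (t:ℂ)))) := by
            rw [← Complex.exp_add, ← Complex.exp_add, ← Complex.exp_add]
            congr 1; ring
          linear_combination (σ₁ t * v₂ t) * e1
  -- gamma facts
  have hγ01cont := st11_gamma01_contOn σ₁ μ hσ₁int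
  have hγ01nn : ∀ s : ℝ, 0 ≤ gamma01 σ₁ μ s := fun s => norm_nonneg _
  set γ1 := gamma1 σ₁ q μ with hγ1def
  set γ2 := gamma2 σ₂ q μ with hγ2def
  have hγ1nn : 0 ≤ γ1 := ENNReal.toReal_nonneg
  have hγ2nn : 0 ≤ γ2 := ENNReal.toReal_nonneg
  set nσ₁ := ∫ t in (0:ℝ)..1, ‖σ₁ t‖ with hnσ₁def
  set nσ₂ := ∫ t in (0:ℝ)..1, ‖σ₂ t‖ with hnσ₂def
  have hnσ₁0 : 0 ≤ nσ₁ := intervalIntegral.integral_nonneg h01 (fun t _ => norm_nonneg _)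
  have hnσ₂0 : 0 ≤ nσ₂ := intervalIntegral.integral_nonneg h01 (fun t _ => norm_nonneg _)
  set B₀ := ∫ t in (0:ℝ)..1, ‖σ₂ t‖ * gamma01 σ₁ μ t with hB₀def
  have hB₀0 : 0 ≤ B₀ :=
    intervalIntegral.integral_nonneg h01 (fun t _ => mul_nonneg (norm_nonneg _) (hγ01nn t))
  -- sigma norm facts
  have hmaxm : AEStronglyMeasurable (fun x => max ‖σ₁ x‖ ‖σ₂ x‖)
      (volume.restrict (Icc (0:ℝ) 1)) := (hσ₁m.norm.max hσ₂m.norm).aestronglyMeasurable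
  have hmax : MemLp (fun x => max ‖σ₁ x‖ ‖σ₂ x‖) p (volume.restrict (Icc (0:ℝ) 1)) := by
    refine MemLp.of_le (hσ₁.norm.add hσ₂.norm) hmaxm (ae_of_all _ (fun t => ?_))
    simp only [Pi.add_apply, Real.norm_eq_abs]
    rw [abs_of_nonneg (le_trans (norm_nonneg (σ₁ t)) (le_max_left _ _)),
      abs_of_nonneg (by positivity)]
    exact max_le (by linarith [norm_nonneg (σ₂ t)]) (by linarith [norm_nonneg (σ₁ t)])
  have hSfin : eLpNorm (fun x => max ‖σ₁ x‖ ‖σ₂ x‖) p (volume.restrict (Icc (0:ℝ) 1)) ≠ ⊤ :=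
    hmax.2.ne
  have hSp₁ : (eLpNorm σ₁ p (volume.restrict (Icc (0:ℝ) 1))).toReal ≤ S := by
    rw [hSdef]; unfold sigmaNorm
    refine ENNReal.toReal_mono hSfin (eLpNorm_mono (fun t => ?_))
    exact (le_max_left _ _).trans (le_abs_self _)
  have hSp₂ : (eLpNorm σ₂ p (volume.restrict (Icc (0:ℝ) 1))).toReal ≤ S := by
    rw [hSdef]; unfold sigmaNorm
    refine ENNReal.toReal_mono hSfin (eLpNorm_mono (fun t => ?_))
    exact (le_max_right _ _).trans (le_abs_self _)
  have hnσ₁S : nσ₁ ≤ S := by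
    have h := st11_int_le_eLpNorm_toReal (f := fun t => ‖σ₁ t‖) hσ₁int.norm hσ₁.1.norm hp1
      (by rw [eLpNorm_norm]; exact hσ₁.2.ne)
    rw [eLpNorm_norm] at h
    exact h.trans hSp₁
  have hnσ₂S : nσ₂ ≤ S := by
    have h := st11_int_le_eLpNorm_toReal (f := fun t => ‖σ₂ t‖) hσ₂int.norm hσ₂.1.norm hp1
      (by rw [eLpNorm_norm]; exact hσ₂.2.ne)
    rw [eLpNorm_norm] at h
    exact h.trans hSp₂
  have hB₀le : B₀ ≤ S * γ1 := by
    have h := st11_holder hp1 hpq σ₂ hσ₂ (gamma01 σ₁ μ) hγ01cont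
    have h2 : (eLpNorm (gamma01 σ₁ μ) q (volume.restrict (Icc (0:ℝ) 1))).toReal = γ1 := rfl
    rw [h2] at h
    exact h.trans (mul_le_mul_of_nonneg_right hSp₂ hγ1nn)
  have haγ : a * γ1 ≤ 1/2 := by
    rcases eq_or_lt_of_le ha0 with h|h
    · rw [← h, zero_mul]; norm_num
    · rw [le_div_iff₀ (by positivity : (0:ℝ) < 2*a)] at hγ1le
      nlinarith
  -- maxima
  obtain ⟨xM, hxMmem, hxMmax⟩ := isCompact_Icc.exists_isMaxOn
    (f := fun t => ‖E t * v₂ t - 1‖) ⟨0, hIcc0⟩ ((hzcont.sub continuousOn_const).norm)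
  set M := ‖E xM * v₂ xM - 1‖ with hMdef
  have hM : ∀ t ∈ Icc (0:ℝ) 1, ‖E t * v₂ t - 1‖ ≤ M := fun t ht => hxMmax ht
  have hM0 : 0 ≤ M := norm_nonneg _
  obtain ⟨xU, hxUmem, hxUmax⟩ := isCompact_Icc.exists_isMaxOn
    (f := fun t => ‖E t * v₁ t‖) ⟨0, hIcc0⟩ (hucont.norm)
  set U := ‖E xU * v₁ xU‖ with hUdef
  have hUb : ∀ t ∈ Icc (0:ℝ) 1, ‖E t * v₁ t‖ ≤ U := fun t ht => hxUmax ht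
  have hU0 : 0 ≤ U := norm_nonneg _
  have hz1 : ∀ t ∈ Icc (0:ℝ) 1, ‖E t * v₂ t‖ ≤ 1 + M := by
    intro t ht
    rw [show E t * v₂ t = (E t * v₂ t - 1) + 1 by ring]
    refine (norm_add_le _ _).trans ?_
    rw [norm_one]
    linarith [hM t ht]
  -- crude bound on U
  have hUcrude : U ≤ Real.exp (2*r) * (1+M) * nσ₁ := by
    have hintProd : IntegrableOn
        (fun t : ℝ => Complex.exp (2*Complex.I*μ*((xU:ℂ) - t)) * (σ₁ t * (E t * v₂ t)))
        (Icc 0 1) volume :=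
      IntegrableOn.continuousOn_mul (hexp2cont xU).continuousOn
        (st11_mul hσ₁int hzcont) isCompact_Icc
    have h1 : U ≤ ∫ t in (0:ℝ)..xU,
        ‖Complex.exp (2*Complex.I*μ*((xU:ℂ) - t)) * (σ₁ t * (E t * v₂ t))‖ := by
      rw [hUdef, hustar xU hxUmem, norm_neg]
      exact intervalIntegral.norm_integral_le_integral_norm hxUmem.1
    have h2 : ∫ t in (0:ℝ)..xU,
        ‖Complex.exp (2*Complex.I*μ*((xU:ℂ) - t)) * (σ₁ t * (E t * v₂ t))‖
        ≤ ∫ t in (0:ℝ)..xU, (Real.exp (2*r) * (1+M)) * ‖σ₁ t‖ := by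
      refine intervalIntegral.integral_mono_on hxUmem.1
        ((st11_ii hintProd hIcc0 hxUmem).norm)
        (((st11_ii hσ₁int hIcc0 hxUmem).norm).const_mul _) (fun t ht => ?_)
      rw [norm_mul, norm_mul]
      have hh1 : ‖Complex.exp (2*Complex.I*μ*((xU:ℂ) - t))‖ ≤ Real.exp (2*r) :=
        st11_norm_exp' hr hμr ht.1 ht.2 hxUmem.2
      have hh2 : ‖E t * v₂ t‖ ≤ 1 + M := hz1 t ⟨ht.1, ht.2.trans hxUmem.2⟩
      have hnn := norm_nonneg (σ₁ t)
      calc ‖Complex.exp (2*Complex.I*μ*((xU:ℂ) - t))‖ * (‖σ₁ t‖ * ‖E t * v₂ t‖)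
          ≤ Real.exp (2*r) * (‖σ₁ t‖ * (1+M)) :=
            mul_le_mul hh1 (mul_le_mul_of_nonneg_left hh2 hnn)
              (mul_nonneg hnn (norm_nonneg _)) (Real.exp_pos _).le
        _ = (Real.exp (2*r) * (1+M)) * ‖σ₁ t‖ := by ring
    have h3 : ∫ t in (0:ℝ)..xU, (Real.exp (2*r) * (1+M)) * ‖σ₁ t‖
        ≤ ∫ t in (0:ℝ)..1, (Real.exp (2*r) * (1+M)) * ‖σ₁ t‖ := by
      refine intervalIntegral.integral_mono_interval (le_refl (0:ℝ)) hxUmem.1 hxUmem.2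
        (ae_of_all _ (fun t => by positivity)) (((st11_ii hσ₁int hIcc0 hIcc1).norm).const_mul _)
    have h4 : ∫ t in (0:ℝ)..1, (Real.exp (2*r) * (1+M)) * ‖σ₁ t‖
        = Real.exp (2*r) * (1+M) * nσ₁ := by
      rw [intervalIntegral.integral_const_mul, hnσ₁def]
    linarith
  -- more integrability facts
  have hFint : ∀ y : ℝ, IntegrableOn
      (fun s : ℝ => Complex.exp (2*Complex.I*μ*((y:ℂ) - s)) * σ₁ s) (Icc 0 1) volume :=
    fun y => IntegrableOn.continuousOn_mul (hexp2cont y).continuousOn hσ₁int isCompact_Icc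
  have hQcont : ContinuousOn (fun s : ℝ => ∫ τ in (0:ℝ)..s, σ₂ τ * (E τ * v₁ τ))
      (Icc (0:ℝ) 1) := by
    have := intervalIntegral.continuousOn_primitive_interval (μ := volume)
      (a := (0:ℝ)) (b := 1) (by rw [uIcc_of_le h01]; exact hσ₂u)
    rwa [uIcc_of_le h01] at this
  have hc₀n : ‖∫ τ in (0:ℝ)..1, σ₂ τ * (E τ * v₁ τ)‖ ≤ nσ₂ * U := by
    refine (intervalIntegral.norm_integral_le_integral_norm h01).trans ?_
    have h2 : ∫ τ in (0:ℝ)..1, ‖σ₂ τ * (E τ * v₁ τ)‖ ≤ ∫ τ in (0:ℝ)..1, ‖σ₂ τ‖ * U :=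
      intervalIntegral.integral_mono_on h01 ((st11_ii hσ₂u hIcc0 hIcc1).norm)
        (((st11_ii hσ₂int hIcc0 hIcc1).norm).mul_const _)
        (fun τ hτ => by
          rw [norm_mul]
          exact mul_le_mul_of_nonneg_left (hUb τ hτ) (norm_nonneg _))
    rwa [intervalIntegral.integral_mul_const] at h2
  have hnB : IntervalIntegrable (fun s => ‖σ₂ s‖ * gamma01 σ₁ μ s) volume 0 1 :=
    ((st11_ii hσ₂int hIcc0 hIcc1).norm).mul_continuousOn
      (hγ01cont.mono (by rw [uIcc_of_le h01]))
  -- refined pointwise bound on u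
  have hu_ref : ∀ t ∈ Icc (0:ℝ) 1, ‖E t * v₁ t‖
      ≤ gamma01 σ₁ μ t * (1 + 2*nσ₂*U) + Real.exp (2*r) * B₀ * U := by
    intro t ht
    have hsub01 : Icc (0:ℝ) t ⊆ Icc (0:ℝ) 1 := fun s hs => ⟨hs.1, hs.2.trans ht.2⟩
    have huIcct : uIcc (0:ℝ) t = Icc (0:ℝ) t := uIcc_of_le ht.1
    have hEz1cont : ContinuousOn (fun s => E s * v₂ s - 1) (Icc (0:ℝ) 1) :=
      hzcont.sub continuousOn_const
    have hIn1 : IntervalIntegrable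
        (fun s : ℝ => Complex.exp (2*Complex.I*μ*((t:ℂ) - s)) * σ₁ s) volume 0 t :=
      st11_ii (hFint t) hIcc0 ht
    have hIntz : IntegrableOn
        (fun s : ℝ => Complex.exp (2*Complex.I*μ*((t:ℂ) - s)) * (σ₁ s * (E s * v₂ s - 1)))
        (Icc 0 1) volume :=
      IntegrableOn.continuousOn_mul (hexp2cont t).continuousOn
        (st11_mul hσ₁int hEz1cont) isCompact_Icc
    have hIntz' : IntervalIntegrable
        (fun s : ℝ => Complex.exp (2*Complex.I*μ*((t:ℂ) - s)) * (σ₁ s * (E s * v₂ s - 1)))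
        volume 0 t := st11_ii hIntz hIcc0 ht
    have hsplit : E t * v₁ t
        = -(∫ s in (0:ℝ)..t, Complex.exp (2*Complex.I*μ*((t:ℂ) - s)) * σ₁ s)
          - ∫ s in (0:ℝ)..t,
              Complex.exp (2*Complex.I*μ*((t:ℂ) - s)) * (σ₁ s * (E s * v₂ s - 1)) := by
      rw [hustar t ht]
      have hc : ∫ s in (0:ℝ)..t, Complex.exp (2*Complex.I*μ*((t:ℂ) - s)) * (σ₁ s * (E s * v₂ s))
          = (∫ s in (0:ℝ)..t, Complex.exp (2*Complex.I*μ*((t:ℂ) - s)) * σ₁ s)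
            + ∫ s in (0:ℝ)..t,
                Complex.exp (2*Complex.I*μ*((t:ℂ) - s)) * (σ₁ s * (E s * v₂ s - 1)) := by
        rw [← intervalIntegral.integral_add hIn1 hIntz']
        refine intervalIntegral.integral_congr (fun s _ => ?_)
        ring
      rw [hc]; ring
    set c₀ := ∫ τ in (0:ℝ)..1, σ₂ τ * (E τ * v₁ τ) with hc₀def
    have hzd : ∀ s ∈ Icc (0:ℝ) 1,
        E s * v₂ s - 1 = c₀ - ∫ τ in (0:ℝ)..s, σ₂ τ * (E τ * v₁ τ) := by
      intro s hs
      rw [hzsub s hs, hc₀def]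
      exact (intervalIntegral.integral_interval_sub_left
        (st11_ii hσ₂u hIcc0 hIcc1) (st11_ii hσ₂u hIcc0 hs)).symm
    have hIntFQ : IntervalIntegrable
        (fun s : ℝ => (Complex.exp (2*Complex.I*μ*((t:ℂ) - s)) * σ₁ s)
          * ∫ τ in (0:ℝ)..s, σ₂ τ * (E τ * v₁ τ)) volume 0 t :=
      hIn1.mul_continuousOn (hQcont.mono (by rw [huIcct]; exact hsub01))
    have hW : ∫ s in (0:ℝ)..t,
          Complex.exp (2*Complex.I*μ*((t:ℂ) - s)) * (σ₁ s * (E s * v₂ s - 1))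
        = c₀ * (∫ s in (0:ℝ)..t, Complex.exp (2*Complex.I*μ*((t:ℂ) - s)) * σ₁ s)
          - ∫ s in (0:ℝ)..t,
              (∫ τ in s..t, Complex.exp (2*Complex.I*μ*((t:ℂ) - τ)) * σ₁ τ)
                * (σ₂ s * (E s * v₁ s)) := by
      calc ∫ s in (0:ℝ)..t,
            Complex.exp (2*Complex.I*μ*((t:ℂ) - s)) * (σ₁ s * (E s * v₂ s - 1))
          = ∫ s in (0:ℝ)..t,
              ((Complex.exp (2*Complex.I*μ*((t:ℂ) - s)) * σ₁ s) * c₀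
                - (Complex.exp (2*Complex.I*μ*((t:ℂ) - s)) * σ₁ s)
                  * ∫ τ in (0:ℝ)..s, σ₂ τ * (E τ * v₁ τ)) := by
            refine intervalIntegral.integral_congr (fun s hs => ?_)
            rw [huIcct] at hs
            rw [hzd s (hsub01 hs)]
            ring
        _ = (∫ s in (0:ℝ)..t, Complex.exp (2*Complex.I*μ*((t:ℂ) - s)) * σ₁ s) * c₀
              - ∫ s in (0:ℝ)..t, (Complex.exp (2*Complex.I*μ*((t:ℂ) - s)) * σ₁ s)
                  * ∫ τ in (0:ℝ)..s, σ₂ τ * (E τ * v₁ τ) := by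
            rw [intervalIntegral.integral_sub (hIn1.mul_const _) hIntFQ,
              intervalIntegral.integral_mul_const]
        _ = _ := by
            rw [st11_swap (fun s => Complex.exp (2*Complex.I*μ*((t:ℂ) - s)) * σ₁ s)
              (fun τ => σ₂ τ * (E τ * v₁ τ)) ht.1
              ((hFint t).mono_set (fun s hs => ⟨hs.1.le, hs.2.trans ht.2⟩))
              (hσ₂u.mono_set (fun s hs => ⟨hs.1.le, hs.2.trans ht.2⟩))]
            ring
    -- bounds
    have hFs : ∀ s ∈ Icc (0:ℝ) t,
        ‖∫ τ in s..t, Complex.exp (2*Complex.I*μ*((t:ℂ) - τ)) * σ₁ τ‖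
          ≤ gamma01 σ₁ μ t + Real.exp (2*r) * gamma01 σ₁ μ s := by
      intro s hs
      rw [← intervalIntegral.integral_interval_sub_left (st11_ii (hFint t) hIcc0 ht)
        (st11_ii (hFint t) hIcc0 (hsub01 hs))]
      refine (norm_sub_le _ _).trans ?_
      have h2 := st11_gamma01_shift_bound (σ₁ := σ₁) (μ := μ) hr hμr hs.1 hs.2 ht.2
      have h1 : ‖∫ τ in (0:ℝ)..t, Complex.exp (2*Complex.I*μ*((t:ℂ) - τ)) * σ₁ τ‖
          = gamma01 σ₁ μ t := rfl
      have h3 : ‖∫ τ in (0:ℝ)..s, Complex.exp (2*Complex.I*μ*((t:ℂ) - τ)) * σ₁ τ‖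
          ≤ Real.exp (2*r) * gamma01 σ₁ μ s := h2
      linarith
    have hGcont : ContinuousOn
        (fun s : ℝ => ∫ τ in s..t, Complex.exp (2*Complex.I*μ*((t:ℂ) - τ)) * σ₁ τ)
        (Icc (0:ℝ) t) := by
      have := intervalIntegral.continuousOn_primitive_interval_left (μ := volume)
        (a := (0:ℝ)) (b := t)
        (by rw [huIcct]; exact (hFint t).mono_set hsub01)
      rwa [huIcct] at this
    have hn2a : ‖∫ s in (0:ℝ)..t,
          (∫ τ in s..t, Complex.exp (2*Complex.I*μ*((t:ℂ) - τ)) * σ₁ τ)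
            * (σ₂ s * (E s * v₁ s))‖
        ≤ ∫ s in (0:ℝ)..t,
            (gamma01 σ₁ μ t + Real.exp (2*r) * gamma01 σ₁ μ s) * (‖σ₂ s‖ * U) := by
      refine (intervalIntegral.norm_integral_le_integral_norm ht.1).trans ?_
      refine intervalIntegral.integral_mono_on ht.1 ?_ ?_ (fun s hs => ?_)
      · exact (((st11_ii hσ₂u hIcc0 ht).continuousOn_mul
          (by rw [huIcct]; exact hGcont)).norm)
      · exact IntervalIntegrable.continuousOn_mul
          (((st11_ii hσ₂int hIcc0 ht).norm).mul_const U)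
          (by rw [huIcct]
              exact continuousOn_const.add
                (continuousOn_const.mul (hγ01cont.mono hsub01)))
      · rw [norm_mul, norm_mul]
        refine mul_le_mul (hFs s hs) (mul_le_mul_of_nonneg_left (hUb s (hsub01 hs))
          (norm_nonneg _)) (mul_nonneg (norm_nonneg _) (norm_nonneg _)) ?_
        have := hγ01nn t
        have := hγ01nn s
        positivity
    -- combine inside hu_ref
    have hmono2 : ∫ s in (0:ℝ)..t,
          (gamma01 σ₁ μ t + Real.exp (2*r) * gamma01 σ₁ μ s) * (‖σ₂ s‖ * U)
        ≤ ∫ s in (0:ℝ)..1,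
          (gamma01 σ₁ μ t + Real.exp (2*r) * gamma01 σ₁ μ s) * (‖σ₂ s‖ * U) := by
      refine intervalIntegral.integral_mono_interval (le_refl (0:ℝ)) ht.1 ht.2
        (ae_of_all _ (fun s => mul_nonneg
          (add_nonneg (hγ01nn t) (mul_nonneg (Real.exp_pos _).le (hγ01nn s)))
          (mul_nonneg (norm_nonneg _) hU0))) ?_
      exact IntervalIntegrable.continuousOn_mul
        (((st11_ii hσ₂int hIcc0 hIcc1).norm).mul_const U)
        (by rw [uIcc_of_le h01]
            exact continuousOn_const.add
              (continuousOn_const.mul (hγ01cont.mono (fun y hy => hy))))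
    have heval : ∫ s in (0:ℝ)..1,
          (gamma01 σ₁ μ t + Real.exp (2*r) * gamma01 σ₁ μ s) * (‖σ₂ s‖ * U)
        = gamma01 σ₁ μ t * U * nσ₂ + Real.exp (2*r) * U * B₀ := by
      calc ∫ s in (0:ℝ)..1,
            (gamma01 σ₁ μ t + Real.exp (2*r) * gamma01 σ₁ μ s) * (‖σ₂ s‖ * U)
          = ∫ s in (0:ℝ)..1, ((gamma01 σ₁ μ t * U) * ‖σ₂ s‖
              + (Real.exp (2*r) * U) * (‖σ₂ s‖ * gamma01 σ₁ μ s)) :=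
            intervalIntegral.integral_congr (fun s _ => by ring)
        _ = _ := by
            rw [intervalIntegral.integral_add
              (((st11_ii hσ₂int hIcc0 hIcc1).norm).const_mul _) (hnB.const_mul _),
              intervalIntegral.integral_const_mul, intervalIntegral.integral_const_mul,
              hnσ₂def, hB₀def]
    have hWn : ‖∫ s in (0:ℝ)..t,
          Complex.exp (2*Complex.I*μ*((t:ℂ) - s)) * (σ₁ s * (E s * v₂ s - 1))‖
        ≤ ‖c₀‖ * gamma01 σ₁ μ t
          + ∫ s in (0:ℝ)..t,
              (gamma01 σ₁ μ t + Real.exp (2*r) * gamma01 σ₁ μ s) * (‖σ₂ s‖ * U) := by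
      rw [hW]
      refine (norm_sub_le _ _).trans ?_
      have e1 : ‖c₀ * ∫ s in (0:ℝ)..t, Complex.exp (2*Complex.I*μ*((t:ℂ) - s)) * σ₁ s‖
          = ‖c₀‖ * gamma01 σ₁ μ t := by rw [norm_mul]; rfl
      rw [e1]
      exact add_le_add le_rfl hn2a
    have h0 : ‖E t * v₁ t‖ ≤ gamma01 σ₁ μ t
        + ‖∫ s in (0:ℝ)..t,
            Complex.exp (2*Complex.I*μ*((t:ℂ) - s)) * (σ₁ s * (E s * v₂ s - 1))‖ := by
      rw [hsplit]
      refine (norm_sub_le _ _).trans ?_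
      rw [norm_neg]
      exact le_of_eq rfl
    have hcc := mul_le_mul_of_nonneg_right hc₀n (hγ01nn t)
    linarith [h0, hWn, hmono2, heval, hcc]
  -- bound on M
  have hMle : M ≤ B₀ * (1 + 2*nσ₂*U) + Real.exp (2*r) * B₀ * U * nσ₂ := by
    have hbcont : ContinuousOn
        (fun t => gamma01 σ₁ μ t * (1 + 2*nσ₂*U) + Real.exp (2*r) * B₀ * U)
        (Icc (0:ℝ) 1) :=
      ((hγ01cont.mul continuousOn_const).add continuousOn_const)
    have h1 : M ≤ ∫ t in xM..1, ‖σ₂ t * (E t * v₁ t)‖ := by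
      rw [hMdef, hzsub xM hxMmem]
      exact intervalIntegral.norm_integral_le_integral_norm hxMmem.2
    have h2 : ∫ t in xM..1, ‖σ₂ t * (E t * v₁ t)‖
        ≤ ∫ t in xM..1, ‖σ₂ t‖ * (gamma01 σ₁ μ t * (1 + 2*nσ₂*U) + Real.exp (2*r) * B₀ * U) := by
      refine intervalIntegral.integral_mono_on hxMmem.2
        ((st11_ii hσ₂u hxMmem hIcc1).norm)
        (((st11_ii hσ₂int hxMmem hIcc1).norm).mul_continuousOn
          (hbcont.mono (fun y hy => by
            rw [uIcc_of_le hxMmem.2] at hy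
            exact ⟨hxMmem.1.trans hy.1, hy.2⟩)))
        (fun t ht => ?_)
      rw [norm_mul]
      exact mul_le_mul_of_nonneg_left (hu_ref t ⟨hxMmem.1.trans ht.1, ht.2⟩) (norm_nonneg _)
    have h3 : ∫ t in xM..1, ‖σ₂ t‖ * (gamma01 σ₁ μ t * (1 + 2*nσ₂*U) + Real.exp (2*r) * B₀ * U)
        ≤ ∫ t in (0:ℝ)..1, ‖σ₂ t‖ * (gamma01 σ₁ μ t * (1 + 2*nσ₂*U) + Real.exp (2*r) * B₀ * U) := by
      refine intervalIntegral.integral_mono_interval hxMmem.1 hxMmem.2 (le_refl (1:ℝ))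
        (ae_of_all _ (fun t => mul_nonneg (norm_nonneg _)
          (add_nonneg (mul_nonneg (hγ01nn t)
            (by positivity)) (by positivity)))) ?_
      exact ((st11_ii hσ₂int hIcc0 hIcc1).norm).mul_continuousOn
        (by rw [uIcc_of_le h01]; exact hbcont)
    have h4 : ∫ t in (0:ℝ)..1, ‖σ₂ t‖ * (gamma01 σ₁ μ t * (1 + 2*nσ₂*U) + Real.exp (2*r) * B₀ * U)
        = B₀ * (1 + 2*nσ₂*U) + Real.exp (2*r) * B₀ * U * nσ₂ := by
      calc ∫ t in (0:ℝ)..1, ‖σ₂ t‖ * (gamma01 σ₁ μ t * (1 + 2*nσ₂*U) + Real.exp (2*r) * B₀ * U)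
          = ∫ t in (0:ℝ)..1, ((1 + 2*nσ₂*U) * (‖σ₂ t‖ * gamma01 σ₁ μ t)
              + (Real.exp (2*r) * B₀ * U) * ‖σ₂ t‖) :=
            intervalIntegral.integral_congr (fun t _ => by ring)
        _ = _ := by
            rw [intervalIntegral.integral_add (hnB.const_mul _)
              (((st11_ii hσ₂int hIcc0 hIcc1).norm).const_mul _),
              intervalIntegral.integral_const_mul, intervalIntegral.integral_const_mul,
              hnσ₂def, hB₀def]
            ring
    linarith
  -- simple pointwise bound on u via M
  have hu_simple : ∀ t ∈ Icc (0:ℝ) 1,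
      ‖E t * v₁ t‖ ≤ gamma01 σ₁ μ t + Real.exp (2*r) * M * nσ₁ := by
    intro t ht
    have hEz1cont : ContinuousOn (fun s => E s * v₂ s - 1) (Icc (0:ℝ) 1) :=
      hzcont.sub continuousOn_const
    have hIn1 : IntervalIntegrable
        (fun s : ℝ => Complex.exp (2*Complex.I*μ*((t:ℂ) - s)) * σ₁ s) volume 0 t :=
      st11_ii (hFint t) hIcc0 ht
    have hIntz : IntegrableOn
        (fun s : ℝ => Complex.exp (2*Complex.I*μ*((t:ℂ) - s)) * (σ₁ s * (E s * v₂ s - 1)))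
        (Icc 0 1) volume :=
      IntegrableOn.continuousOn_mul (hexp2cont t).continuousOn
        (st11_mul hσ₁int hEz1cont) isCompact_Icc
    have hIntz' : IntervalIntegrable
        (fun s : ℝ => Complex.exp (2*Complex.I*μ*((t:ℂ) - s)) * (σ₁ s * (E s * v₂ s - 1)))
        volume 0 t := st11_ii hIntz hIcc0 ht
    have hsplit : E t * v₁ t
        = -(∫ s in (0:ℝ)..t, Complex.exp (2*Complex.I*μ*((t:ℂ) - s)) * σ₁ s)
          - ∫ s in (0:ℝ)..t,
              Complex.exp (2*Complex.I*μ*((t:ℂ) - s)) * (σ₁ s * (E s * v₂ s - 1)) := by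
      rw [hustar t ht]
      have hc : ∫ s in (0:ℝ)..t, Complex.exp (2*Complex.I*μ*((t:ℂ) - s)) * (σ₁ s * (E s * v₂ s))
          = (∫ s in (0:ℝ)..t, Complex.exp (2*Complex.I*μ*((t:ℂ) - s)) * σ₁ s)
            + ∫ s in (0:ℝ)..t,
                Complex.exp (2*Complex.I*μ*((t:ℂ) - s)) * (σ₁ s * (E s * v₂ s - 1)) := by
        rw [← intervalIntegral.integral_add hIn1 hIntz']
        refine intervalIntegral.integral_congr (fun s _ => ?_)
        ring
      rw [hc]; ring
    have h0 : ‖E t * v₁ t‖ ≤ gamma01 σ₁ μ t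
        + ‖∫ s in (0:ℝ)..t,
            Complex.exp (2*Complex.I*μ*((t:ℂ) - s)) * (σ₁ s * (E s * v₂ s - 1))‖ := by
      rw [hsplit]
      refine (norm_sub_le _ _).trans ?_
      rw [norm_neg]
      exact le_of_eq rfl
    have h1 : ‖∫ s in (0:ℝ)..t,
          Complex.exp (2*Complex.I*μ*((t:ℂ) - s)) * (σ₁ s * (E s * v₂ s - 1))‖
        ≤ ∫ s in (0:ℝ)..t, (Real.exp (2*r) * M) * ‖σ₁ s‖ := by
      refine (intervalIntegral.norm_integral_le_integral_norm ht.1).trans ?_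
      refine intervalIntegral.integral_mono_on ht.1 (hIntz'.norm)
        (((st11_ii hσ₁int hIcc0 ht).norm).const_mul _) (fun s hs => ?_)
      rw [norm_mul, norm_mul]
      have hh1 : ‖Complex.exp (2*Complex.I*μ*((t:ℂ) - s))‖ ≤ Real.exp (2*r) :=
        st11_norm_exp' hr hμr hs.1 hs.2 ht.2
      have hh2 : ‖E s * v₂ s - 1‖ ≤ M := hM s ⟨hs.1, hs.2.trans ht.2⟩
      have hnn := norm_nonneg (σ₁ s)
      calc ‖Complex.exp (2*Complex.I*μ*((t:ℂ) - s))‖ * (‖σ₁ s‖ * ‖E s * v₂ s - 1‖)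
          ≤ Real.exp (2*r) * (‖σ₁ s‖ * M) :=
            mul_le_mul hh1 (mul_le_mul_of_nonneg_left hh2 hnn)
              (mul_nonneg hnn (norm_nonneg _)) (Real.exp_pos _).le
        _ = (Real.exp (2*r) * M) * ‖σ₁ s‖ := by ring
    have h2 : ∫ s in (0:ℝ)..t, (Real.exp (2*r) * M) * ‖σ₁ s‖
        ≤ ∫ s in (0:ℝ)..1, (Real.exp (2*r) * M) * ‖σ₁ s‖ := by
      refine intervalIntegral.integral_mono_interval (le_refl (0:ℝ)) ht.1 ht.2
        (ae_of_all _ (fun s => by positivity)) (((st11_ii hσ₁int hIcc0 hIcc1).norm).const_mul _)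
    have h3 : ∫ s in (0:ℝ)..1, (Real.exp (2*r) * M) * ‖σ₁ s‖
        = Real.exp (2*r) * M * nσ₁ := by
      rw [intervalIntegral.integral_const_mul, hnσ₁def]
    linarith
  -- numeric endgame
  have he4 : Real.exp (2*r) * Real.exp (2*r) = Real.exp (4*r) := by
    rw [← Real.exp_add]; congr 1; ring
  have hc_bound : 3*Real.exp (4*r)*nσ₁*nσ₂*B₀ ≤ (3/2)*(a*γ1) := by
    have h1 : nσ₁*nσ₂ ≤ S*S := mul_le_mul hnσ₁S hnσ₂S hnσ₂0 hS0
    have h2 : nσ₁*nσ₂*B₀ ≤ S*S*(S*γ1) :=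
      mul_le_mul h1 hB₀le hB₀0 (mul_nonneg hS0 hS0)
    rw [hadef]
    nlinarith [Real.exp_pos (4*r)]
  have hstep1 : M ≤ B₀ + 3*Real.exp (2*r)*nσ₂*B₀*U := by
    nlinarith [hMle, mul_nonneg (mul_nonneg (mul_nonneg
      (sub_nonneg.mpr he2) hnσ₂0) hU0) hB₀0]
  have hstep2 : M ≤ B₀ + 3*Real.exp (4*r)*nσ₁*nσ₂*B₀*(1+M) := by
    have hcoef : 0 ≤ 3*Real.exp (2*r)*nσ₂*B₀ := by positivity
    have hmm := mul_le_mul_of_nonneg_left hUcrude hcoef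
    have hU4 : 3*Real.exp (2*r)*nσ₂*B₀*U ≤ 3*Real.exp (4*r)*nσ₁*nσ₂*B₀*(1+M) := by
      calc 3*Real.exp (2*r)*nσ₂*B₀*U
          ≤ 3*Real.exp (2*r)*nσ₂*B₀*(Real.exp (2*r)*(1+M)*nσ₁) := by linarith [hmm]
        _ = 3*(Real.exp (2*r)*Real.exp (2*r))*nσ₁*nσ₂*B₀*(1+M) := by ring
        _ = 3*Real.exp (4*r)*nσ₁*nσ₂*B₀*(1+M) := by rw [he4]
    linarith [hstep1, hU4]
  have hcle : 3*Real.exp (4*r)*nσ₁*nσ₂*B₀ ≤ 3/4 := by nlinarith [hc_bound, haγ]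
  have hcnn : 0 ≤ 3*Real.exp (4*r)*nσ₁*nσ₂*B₀ := by positivity
  have hM4 : M ≤ 4*B₀ + 4*(3*Real.exp (4*r)*nσ₁*nσ₂*B₀) := by
    nlinarith [hstep2, mul_le_mul_of_nonneg_right hcle hM0]
  have hMfinal : M ≤ (4*S + 6*a)*γ1 := by nlinarith [hM4, hB₀le, hc_bound]
  -- conclusion
  have hEx : Complex.exp (-(Complex.I * μ * (1 - (x:ℂ)))) = E x := by rw [hE]
  have hγ02nn : 0 ≤ gamma02 σ₂ μ x := norm_nonneg _
  have hKnn : (0:ℝ) ≤ 4*S + 6*a := by linarith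
  have he2S : (0:ℝ) ≤ Real.exp (2*r) * S := by positivity
  have hsum : γ1 ≤ γ1 + γ2 + gamma01 σ₁ μ x + gamma02 σ₂ μ x := by
    linarith [hγ01nn x]
  have hsum0 : (0:ℝ) ≤ γ1 + γ2 + gamma01 σ₁ μ x + gamma02 σ₂ μ x := by
    linarith [hγ01nn x]
  constructor
  · rw [hEx]
    have h1 := hu_simple x hx
    have h2 : Real.exp (2*r) * M * nσ₁ ≤ Real.exp (2*r) * ((4*S+6*a)*γ1) * S := by
      have := mul_le_mul (mul_le_mul_of_nonneg_left hMfinal (Real.exp_pos (2*r)).le)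
        hnσ₁S hnσ₁0 (by positivity)
      linarith
    have h4 := mul_le_mul_of_nonneg_left hsum (mul_nonneg hKnn he2S)
    have h5 : gamma01 σ₁ μ x ≤ γ1 + γ2 + gamma01 σ₁ μ x + gamma02 σ₂ μ x := by linarith
    have h6 := mul_nonneg hKnn hsum0
    linarith [h1, h2, h4, h5, h6]
  · rw [hEx]
    have h1 : ‖E x * v₂ x - 1‖ ≤ M := hM x hx
    have h4 := mul_le_mul_of_nonneg_left hsum hKnn
    have h6 := mul_nonneg (mul_nonneg hKnn he2S) hsum0
    linarith [h1, hMfinal, h4, h6, hsum0]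
end
end
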